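/- arXiv:1401.7869 — 10 statements merged into one kernel-verified Lean document; each statement's English description precedes it below -/
import Mathlib

section
/- If p is an idempotent ultrafilter on ℕ (with respect to addition), then for every natural number k ≥ 1, the set kℕ of positive multiples of k belongs to p. -/
/- The sum of ultrafilters: `A ∈ p + q` iff the set of `m` such that
`{n : m + n ∈ A} ∈ q` belongs to `p` (Mathlib's definition from the Hindman theory file). -/
attribute [local instance] Ultrafilter.add

/-- If `p` is an idempotent ultrafilter on the positive natural numbers
(with respect to addition), then for every natural number `k ≥ 1`, the set of positive
multiples of `k` belongs to `p`. -/
theorem idempotent_ultrafilter_mem_multiples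
    (p : Ultrafilter ℕ+) (hp : p + p = p) (k : ℕ) (hk : 1 ≤ k) :
    {n : ℕ+ | k ∣ (n : ℕ)} ∈ p := by
  haveI : NeZero k := ⟨by omega⟩
  set f : ℕ+ → ZMod k := fun n => ((n : ℕ) : ZMod k) with hf
  obtain ⟨r, hr⟩ := (Ultrafilter.map f p).eq_pure_of_finite
  have hmem : {n : ℕ+ | f n = r} ∈ p := by
    have : {r} ∈ Ultrafilter.map f p := by rw [hr]; exact rfl
    simpa [Ultrafilter.mem_map, Set.preimage, Set.mem_singleton_iff] using this
  have hA : {n : ℕ+ | f n = r} ∈ p + p := by rw [hp]; exact hmem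
  have hev : ∀ᶠ m in (p : Filter ℕ+), ∀ᶠ n in (p : Filter ℕ+), f (m + n) = r := by
    have := (Ultrafilter.eventually_add p p (fun x => f x = r)).2 hA
    exact this
  have hr0 : r + r = r := by
    obtain ⟨m, hm1, hm2⟩ := (hev.and hmem).exists
    obtain ⟨n, hn1, hn2⟩ := (hm1.and hmem).exists
    have : f (m + n) = f m + f n := by simp [hf]
    rw [hn1, hm2, hn2] at this
    exact this.symm
  have hr' : r = 0 := by
    have := hr0
    have h2 : r + r - r = r - r := by rw [hr0]
    simpa using h2
  have : {n : ℕ+ | f n = r} ⊆ {n : ℕ+ | k ∣ (n : ℕ)} := by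
    intro n hn
    simp only [Set.mem_setOf_eq] at hn ⊢
    rw [hr'] at hn
    exact (ZMod.natCast_eq_zero_iff _ _).1 hn
  exact p.mem_of_superset hmem this
end

section
/- Let (X,d) be a compact metric space, p an idempotent ultrafilter on ℕ, and (x_n) a sequence in X with p-lim x_n = x. Then there exists an increasing sequence (n_i) of natural numbers such that the IP-limit of x over the finite sums of (n_i) equals x; i.e., for every ε > 0 there is N such that for every nonempty finite set α ⊂ ℕ with min α ≥ N, d(x_{n_α}, x) < ε, where n_α = Σ_{i∈α} n_i. -/
attribute [local instance] Ultrafilter.add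

open Filter

namespace IPaux

variable (p : Ultrafilter ℕ+)

/-- the Galvin–Glazer star set -/
def star (A : Set ℕ+) : Set ℕ+ := {n | n ∈ A ∧ {m : ℕ+ | n + m ∈ A} ∈ p}

theorem star_subset (A : Set ℕ+) : star p A ⊆ A := fun _ h => h.1

theorem mem_add_iff (q r : Ultrafilter ℕ+) (A : Set ℕ+) :
    A ∈ q + r ↔ {n : ℕ+ | {m : ℕ+ | n + m ∈ A} ∈ r} ∈ q := Iff.rfl

theorem star_mem (hp : p + p = p) {A : Set ℕ+} (hA : A ∈ p) : star p A ∈ p := by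
  have h2 : A ∈ p + p := by rw [hp]; exact hA
  rw [mem_add_iff] at h2
  exact p.toFilter.inter_mem hA h2

theorem star_shift (hp : p + p = p) {A : Set ℕ+} {n : ℕ+} (hn : n ∈ star p A) :
    {m : ℕ+ | n + m ∈ star p A} ∈ p := by
  have hB : {m : ℕ+ | n + m ∈ A} ∈ p := hn.2
  have h := star_mem p hp hB
  refine p.toFilter.mem_of_superset h ?_
  intro m hm
  refine ⟨hm.1, ?_⟩
  have := hm.2
  simpa [add_assoc] using this

theorem gt_mem (hp : p + p = p) (b : ℕ+) : {m : ℕ+ | b < m} ∈ p := by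
  by_contra h
  have h' : {m : ℕ+ | m ≤ b} ∈ p := by
    have := (p.compl_mem_iff_notMem).mpr h
    refine p.toFilter.mem_of_superset this ?_
    intro m hm
    simpa using hm
  have hfin : {m : ℕ+ | m ≤ b}.Finite := Set.finite_Iic b
  obtain ⟨a, -, rfl⟩ := Ultrafilter.eq_pure_of_finite_mem hfin h'
  have h0 : {a} ∈ (pure a : Ultrafilter ℕ+) + pure a := by
    rw [hp]; exact Ultrafilter.mem_pure.mpr rfl
  rw [mem_add_iff] at h0
  simp only [Ultrafilter.mem_pure] at h0
  have h2 : a + a = a := h0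
  have h3 : (a : ℕ) + (a : ℕ) = (a : ℕ) := by exact_mod_cast congrArg PNat.val h2
  have := a.pos
  omega

end IPaux

/-- If `(X,d)` is a compact metric space, `p` an idempotent ultrafilter on
the positive natural numbers and `(xₙ)` a sequence in `X` with `p`-lim `xₙ = x₀`, then there
is an increasing sequence `(nᵢ)` of positive natural numbers such that the IP-limit of `x`
along the finite sums of `(nᵢ)` is `x₀`: for every `ε > 0` there is `N` such that
`d(x_{n_α}, x₀) < ε` for every nonempty finite `α ⊆ ℕ` with `min α ≥ N`, where
`n_α = Σ_{i ∈ α} nᵢ`. -/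
theorem ip_limit_of_idempotent_ultrafilter_limit {X : Type*} [MetricSpace X]
    [CompactSpace X] (p : Ultrafilter ℕ+) (hp : p + p = p)
    (x : ℕ+ → X) (x₀ : X)
    (hlim : ∀ U : Set X, IsOpen U → x₀ ∈ U → {n : ℕ+ | x n ∈ U} ∈ p) :
    ∃ n : ℕ → ℕ+, StrictMono n ∧
      ∀ ε : ℝ, 0 < ε → ∃ N : ℕ, ∀ α : Finset ℕ, α.Nonempty → (∀ i ∈ α, N ≤ i) →
        ∀ m : ℕ+, (m : ℕ) = ∑ i ∈ α, (n i : ℕ) → dist (x m) x₀ < ε := by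
  classical
  set B : ℕ → Set ℕ+ := fun k => {n | dist (x n) x₀ < (1/2 : ℝ)^k} with hB
  have hBmem : ∀ k, B k ∈ p := by
    intro k
    have := hlim (Metric.ball x₀ ((1/2:ℝ)^k)) Metric.isOpen_ball
      (Metric.mem_ball_self (by positivity))
    refine p.toFilter.mem_of_superset this ?_
    intro m hm
    exact Metric.mem_ball.mp hm
  -- the recursive step
  have key : ∀ (A : Set ℕ+), A ∈ p → ∀ (b : ℕ+), b ∈ IPaux.star p A → ∀ (k : ℕ),
      ∃ (n' : ℕ+) (A' : Set ℕ+), A' ∈ p ∧ b < n' ∧ n' ∈ IPaux.star p A' ∧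
        A' ⊆ IPaux.star p A ∧ A' ⊆ B (k+1) ∧
        (∀ m ∈ A', b + m ∈ IPaux.star p A) := by
    intro A hA b hb k
    set A' : Set ℕ+ := IPaux.star p A ∩ {m | b + m ∈ IPaux.star p A} ∩ B (k+1) with hA'
    have hA'mem : A' ∈ p := p.toFilter.inter_mem
      (p.toFilter.inter_mem (IPaux.star_mem p hp hA) (IPaux.star_shift p hp hb))
      (hBmem (k+1))
    have h1 : IPaux.star p A' ∩ {m | b < m} ∈ p :=
      p.toFilter.inter_mem (IPaux.star_mem p hp hA'mem) (IPaux.gt_mem p hp b)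
    obtain ⟨n', hn1, hn2⟩ := p.nonempty_of_mem h1
    exact ⟨n', A', hA'mem, hn2, hn1, fun m hm => hm.1.1, fun m hm => hm.2,
      fun m hm => hm.1.2⟩
  choose nf Af hAf hlt hnstar hsub hsubB hshift using key
  obtain ⟨n0, hn0⟩ := p.nonempty_of_mem (IPaux.star_mem p hp (hBmem 0))
  -- build the sequence by recursion
  let g : ℕ → {q : Set ℕ+ × ℕ+ // q.1 ∈ p ∧ q.2 ∈ IPaux.star p q.1} := fun k => Nat.rec
    ⟨(B 0, n0), hBmem 0, hn0⟩
    (fun k s => ⟨(Af s.1.1 s.2.1 s.1.2 s.2.2 k, nf s.1.1 s.2.1 s.1.2 s.2.2 k),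
      hAf s.1.1 s.2.1 s.1.2 s.2.2 k, hnstar s.1.1 s.2.1 s.1.2 s.2.2 k⟩) k
  set A : ℕ → Set ℕ+ := fun k => (g k).1.1 with hAdef
  set n : ℕ → ℕ+ := fun k => (g k).1.2 with hndef
  have hgA : ∀ k, A k ∈ p := fun k => (g k).2.1
  have hnst : ∀ k, n k ∈ IPaux.star p (A k) := fun k => (g k).2.2
  have hmono : ∀ k, n k < n (k+1) := fun k => hlt (A k) (hgA k) (n k) (hnst k) k
  have hAsub : ∀ k, A (k+1) ⊆ IPaux.star p (A k) :=
    fun k => hsub (A k) (hgA k) (n k) (hnst k) k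
  have hAle : ∀ j k, j ≤ k → A k ⊆ A j := by
    intro j k h
    induction h with
    | refl => exact fun _ h => h
    | @step k' h ih => exact fun m hm => ih (IPaux.star_subset p (A k') (hAsub k' hm))
  have hAB : ∀ k, A k ⊆ B k := by
    intro k
    cases k with
    | zero => exact fun m hm => hm
    | succ k => exact hsubB (A k) (hgA k) (n k) (hnst k) k
  have hshift' : ∀ k, ∀ m ∈ A (k+1), n k + m ∈ IPaux.star p (A k) :=
    fun k => hshift (A k) (hgA k) (n k) (hnst k) k
  -- main claim: finite sums with indices ≥ min land in star (A min)
  have main : ∀ (α : Finset ℕ) (hne : α.Nonempty) (m : ℕ+),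
      (m : ℕ) = ∑ i ∈ α, (n i : ℕ) → m ∈ IPaux.star p (A (α.min' hne)) := by
    intro α
    induction α using Finset.strongInduction with
    | _ α ih =>
      intro hne m hm
      set i := α.min' hne with hi
      have hiα : i ∈ α := α.min'_mem hne
      by_cases hsing : α = {i}
      · have hmi : m = n i := PNat.coe_injective (by rw [hm, hsing, Finset.sum_singleton])
        rw [hmi]
        exact hnst i
      · set β := α.erase i with hβ
        have hβne : β.Nonempty := by
          rw [Finset.nonempty_iff_ne_empty]
          intro h
          rcases (Finset.erase_eq_empty_iff α i).mp h with h' | h'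
          · exact hne.ne_empty h'
          · exact hsing h'
        have hβss : β ⊂ α := Finset.erase_ssubset hiα
        set j := β.min' hβne with hj
        have hjβ : j ∈ β := β.min'_mem hβne
        have hij : i < j := by
          have h1 : i ≤ j := α.min'_le j ((Finset.erase_subset i α) hjβ)
          have h2 : j ≠ i := Finset.ne_of_mem_erase hjβ
          omega
        have hsumβpos : 0 < ∑ k ∈ β, (n k : ℕ) :=
          Finset.sum_pos (fun k _ => (n k).pos) hβne
        set m' : ℕ+ := ⟨∑ k ∈ β, (n k : ℕ), hsumβpos⟩ with hm'def
        have ihβ : m' ∈ IPaux.star p (A j) := ih β hβss hβne m' rfl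
        have hm'Ai1 : m' ∈ A (i+1) := hAle (i+1) j hij (IPaux.star_subset p (A j) ihβ)
        have hsum : m = n i + m' := by
          apply PNat.coe_injective
          rw [hm]
          have hins : α = insert i β := by rw [hβ, Finset.insert_erase hiα]
          rw [hins, Finset.sum_insert (Finset.notMem_erase i α)]
          rfl
        rw [hsum]
        exact hshift' i m' hm'Ai1
  refine ⟨n, strictMono_nat_of_lt_succ hmono, ?_⟩
  intro ε hε
  obtain ⟨N, hN⟩ := exists_pow_lt_of_lt_one hε (by norm_num : (1/2:ℝ) < 1)
  refine ⟨N, ?_⟩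
  intro α hne hmin m hm
  have hmem := main α hne m hm
  have h1 : m ∈ B (α.min' hne) := hAB _ (IPaux.star_subset p _ hmem)
  have h2 : N ≤ α.min' hne := hmin _ (α.min'_mem hne)
  calc dist (x m) x₀ < (1/2:ℝ)^(α.min' hne) := h1
    _ ≤ (1/2:ℝ)^N := pow_le_pow_of_le_one (by norm_num) (by norm_num) h2
    _ < ε := hN
end

section
/- Let S be a compact metric Abelian semitopological semigroup with multiplication jointly continuous at points of I(S) × S, let s ∈ I(S), and let P ∈ ℤ[x] with P(0)=0 and deg P = d ≥ 1. Let p be an idempotent ultrafilter on ℕ and assume that for each j = 1,…,d−1 there exists r_j ≥ 1 with p-lim_{n∈ℕ} s^{r_j n^j} = 1. Then p-lim_{n∈ℕ} s^{P(n)} is an idempotent of S. -/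
open Filter Topology

attribute [local instance] Ultrafilter.add

section Aux

variable {S : Type*} [CommMonoid S] [MetricSpace S] [CompactSpace S]

private lemma aux_exists_lim (p : Ultrafilter ℕ) (g : ℕ → S) :
    ∃ x : S, Tendsto g ↑p (𝓝 x) :=
  ⟨(p.map g).lim, by
    have := (p.map g).le_nhds_lim
    rwa [Tendsto, ← Ultrafilter.coe_map]⟩

private lemma aux_mul_lim
    (hjoint : ∀ i x : S, IsUnit i → ContinuousAt (fun q : S × S => q.1 * q.2) (i, x))
    (p : Ultrafilter ℕ) {a b : ℕ → S} {β : S}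
    (ha : Tendsto a ↑p (𝓝 1)) (hb : Tendsto b ↑p (𝓝 β)) :
    Tendsto (fun n => a n * b n) ↑p (𝓝 β) := by
  have h := ((hjoint 1 β isUnit_one).tendsto).comp (ha.prodMk_nhds hb)
  simpa [Function.comp_def] using h

private lemma aux_smul_lim
    (hjoint : ∀ i x : S, IsUnit i → ContinuousAt (fun q : S × S => q.1 * q.2) (i, x))
    (p : Ultrafilter ℕ) (u : Sˣ) (a : ℕ → ℤ)
    (h : Tendsto (fun n => ((u ^ a n : Sˣ) : S)) ↑p (𝓝 1)) (k : ℤ) :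
    Tendsto (fun n => ((u ^ (k * a n) : Sˣ) : S)) ↑p (𝓝 1) := by
  have hnat : ∀ m : ℕ, Tendsto (fun n => ((u ^ ((m : ℤ) * a n) : Sˣ) : S)) ↑p (𝓝 1) := by
    intro m
    induction m with
    | zero => simpa using (tendsto_const_nhds :
        Tendsto (fun _ : ℕ => (1 : S)) ↑p (𝓝 1))
    | succ m ih =>
        have h2 := aux_mul_lim hjoint p h ih
        refine h2.congr fun n => ?_
        rw [← Units.val_mul, ← zpow_add]
        congr 2
        push_cast
        ring
  obtain ⟨m, rfl | rfl⟩ := Int.eq_nat_or_neg k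
  · exact hnat m
  · obtain ⟨β, hβ⟩ := aux_exists_lim p (fun n => ((u ^ (-(m : ℤ) * a n) : Sˣ) : S))
    have h1 : Tendsto (fun n =>
        ((u ^ ((m : ℤ) * a n) : Sˣ) : S) * ((u ^ (-(m : ℤ) * a n) : Sˣ) : S)) ↑p (𝓝 β) :=
      aux_mul_lim hjoint p (hnat m) hβ
    have h2 : (fun n : ℕ =>
        ((u ^ ((m : ℤ) * a n) : Sˣ) : S) * ((u ^ (-(m : ℤ) * a n) : Sˣ) : S)) =
        fun _ : ℕ => (1 : S) := by
      funext n
      rw [← Units.val_mul, ← zpow_add]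
      norm_num
    rw [h2] at h1
    have hβ1 : β = 1 := tendsto_nhds_unique h1 tendsto_const_nhds
    rwa [hβ1] at hβ

private lemma aux_dvd_mem (p : Ultrafilter ℕ) (hp : p + p = p) (q : ℕ) (hq : 1 ≤ q) :
    {n : ℕ | q ∣ n} ∈ p := by
  haveI : NeZero q := ⟨by omega⟩
  set c : ℕ → ZMod q := fun n => (n : ZMod q) with hc
  obtain ⟨a, ha⟩ := (p.map c).eq_pure_of_finite
  have hA : ∀ᶠ n in ↑p, c n = a := by
    have : {a} ∈ p.map c := by rw [ha]; exact Filter.singleton_mem_pure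
    exact Filter.mem_of_superset (Ultrafilter.mem_map.mp this) (fun n hn => hn)
  have hA2 : ∀ᶠ m in ↑p, ∀ᶠ n in ↑p, c (m + n) = a := by
    have h5 : ∀ᶠ k in ↑(p + p), c k = a := by rw [hp]; exact hA
    exact (Ultrafilter.eventually_add p p (fun k => c k = a)).mp h5
  obtain ⟨m, hm1, hm2⟩ := (hA.and hA2).exists
  have h0 : ∀ᶠ n in ↑p, c n = 0 := by
    refine hm2.mono fun n hn => ?_
    have hsum : c (m + n) = c m + c n := by simp [hc]
    have h4 : c m + c n = c m := by rw [← hsum, hn, hm1]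
    exact add_eq_left.mp h4
  refine Filter.mem_of_superset h0 fun n hn => ?_
  exact (ZMod.natCast_eq_zero_iff n q).mp hn

private lemma aux_iterated (p : Ultrafilter ℕ) (hp : p + p = p) (f L : ℕ → S) (t : S)
    (ht : Tendsto f ↑p (𝓝 t)) (hL : ∀ m, Tendsto (fun n => f (m + n)) ↑p (𝓝 (L m))) :
    Tendsto L ↑p (𝓝 t) := by
  rw [Metric.tendsto_nhds]
  intro ε hε
  have h1 : ∀ᶠ k in ↑p, dist (f k) t < ε / 2 :=
    Metric.tendsto_nhds.mp ht _ (by positivity)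
  rw [← hp] at h1
  replace h1 := (Ultrafilter.eventually_add p p _).mp h1
  refine h1.mono fun m hm => ?_
  have h2 : dist (L m) t ≤ ε / 2 :=
    le_of_tendsto ((hL m).dist tendsto_const_nhds) (hm.mono fun n hn => hn.le)
  linarith

private lemma aux_L1
    (hjoint : ∀ i x : S, IsUnit i → ContinuousAt (fun q : S × S => q.1 * q.2) (i, x))
    (p : Ultrafilter ℕ) (u : Sˣ) (D : ℕ) (q : ℤ)
    (hmon : ∀ (i : ℕ) (c : ℤ), 1 ≤ i → i ≤ D → q ∣ c →
      Tendsto (fun n : ℕ => ((u ^ (c * (n : ℤ) ^ i) : Sˣ) : S)) ↑p (𝓝 1)) :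
    ∀ (k : ℕ) (Q : Polynomial ℤ), Q.natDegree ≤ k → Q.natDegree ≤ D → Q.coeff 0 = 0 →
      (∀ i, q ∣ Q.coeff i) →
      Tendsto (fun n : ℕ => ((u ^ (Q.eval (n : ℤ)) : Sˣ) : S)) ↑p (𝓝 1) := by
  intro k
  induction k with
  | zero =>
      intro Q h0 _ hc0 _
      have hQ : Q = 0 := by
        have hC := Polynomial.eq_C_of_natDegree_le_zero h0
        rw [hC, hc0, map_zero]
      subst hQ
      simpa using (tendsto_const_nhds : Tendsto (fun _ : ℕ => (1 : S)) ↑p (𝓝 1))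
  | succ k ih =>
      intro Q hk hD hc0 hdvd
      by_cases hQk : Q.natDegree ≤ k
      · exact ih Q hQk hD hc0 hdvd
      · have hdeg : Q.natDegree = k + 1 := le_antisymm hk (by omega)
        have h1 : Tendsto (fun n : ℕ => ((u ^ (Q.eraseLead.eval (n : ℤ)) : Sˣ) : S)) ↑p (𝓝 1) := by
          refine ih Q.eraseLead ?_ ?_ ?_ ?_
          · exact le_trans Q.eraseLead_natDegree_le (by omega)
          · exact le_trans Q.eraseLead_natDegree_le (by omega)
          · rw [Polynomial.eraseLead_coeff_of_ne 0 (by omega), hc0]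
          · intro i
            rw [Polynomial.eraseLead_coeff]
            split
            · exact dvd_zero _
            · exact hdvd i
        have h2 : Tendsto (fun n : ℕ =>
            ((u ^ (Q.leadingCoeff * (n : ℤ) ^ (k + 1)) : Sˣ) : S)) ↑p (𝓝 1) := by
          refine hmon (k + 1) Q.leadingCoeff (by omega) (by omega) ?_
          have := hdvd Q.natDegree
          rwa [Polynomial.leadingCoeff]
        have h3 := aux_mul_lim hjoint p h1 h2
        refine h3.congr fun n => ?_
        rw [← Units.val_mul, ← zpow_add]
        congr 2
        conv_rhs => rw [← Q.eraseLead_add_C_mul_X_pow]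
        simp [hdeg]
  
end Aux

/-- Let `S` be a compact metric Abelian semitopological semigroup (here: a
commutative monoid, with separately continuous multiplication) with multiplication jointly
continuous at points of `I(S) × S`, let `s ∈ I(S)`, and let `P ∈ ℤ[x]` with `P(0) = 0` and
`deg P = d ≥ 1`. Let `p` be an idempotent ultrafilter on `ℕ` such that for each
`j = 1,…,d−1` there is `r_j ≥ 1` with `p-lim s^{r_j n^j} = 1`. Then `p-lim s^{P(n)}`
is an idempotent of `S`. -/
theorem plim_pow_poly_isIdempotent {S : Type*} [CommMonoid S] [MetricSpace S]
    [CompactSpace S]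
    (hl : ∀ a : S, Continuous fun z : S => a * z)
    (hr : ∀ a : S, Continuous fun z : S => z * a)
    (hjoint : ∀ i x : S, IsUnit i → ContinuousAt (fun q : S × S => q.1 * q.2) (i, x))
    (s : S) (hs : IsUnit s) (P : Polynomial ℤ) (d : ℕ)
    (hP0 : P.eval 0 = 0) (hd : P.natDegree = d) (hd1 : 1 ≤ d)
    (p : Ultrafilter ℕ) (hp : p + p = p)
    (hrig : ∀ j : ℕ, 1 ≤ j → j ≤ d - 1 →
      ∃ r : ℕ, 1 ≤ r ∧ Tendsto (fun n : ℕ => s ^ (r * n ^ j)) ↑p (𝓝 (1 : S)))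
    (t : S) (ht : Tendsto (fun n : ℕ => ((hs.unit ^ (P.eval (n : ℤ)) : Sˣ) : S)) ↑p (𝓝 t)) :
    t * t = t := by
  classical
  set u := hs.unit with hu
  choose! r hr1 hr2 using hrig
  set q : ℕ := ∏ i ∈ Finset.Icc 1 (d - 1), r i with hqdef
  have hq1 : 1 ≤ q := Finset.one_le_prod' fun i hi =>
    hr1 i (Finset.mem_Icc.mp hi).1 (Finset.mem_Icc.mp hi).2
  have hmon : ∀ (i : ℕ) (c : ℤ), 1 ≤ i → i ≤ d - 1 → (q : ℤ) ∣ c →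
      Tendsto (fun n : ℕ => ((u ^ (c * (n : ℤ) ^ i) : Sˣ) : S)) ↑p (𝓝 1) := by
    intro i c hi1 hi2 hdvd
    have hri : (r i : ℤ) ∣ c :=
      dvd_trans (Int.natCast_dvd_natCast.mpr
        (Finset.dvd_prod_of_mem r (Finset.mem_Icc.mpr ⟨hi1, hi2⟩))) hdvd
    obtain ⟨e, he⟩ := hri
    have hbase : Tendsto (fun n : ℕ => ((u ^ ((r i : ℤ) * (n : ℤ) ^ i) : Sˣ) : S)) ↑p (𝓝 1) := by
      have h0 := hr2 i hi1 hi2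
      refine h0.congr fun n => ?_
      rw [show ((r i : ℤ) * (n : ℤ) ^ i) = ((r i * n ^ i : ℕ) : ℤ) by push_cast; ring,
        zpow_natCast, Units.val_pow_eq_pow_val, hs.unit_spec]
    have h1 := aux_smul_lim hjoint p u _ hbase e
    refine h1.congr fun n => ?_
    congr 2
    rw [he]; ring
  set f : ℕ → S := fun n => ((u ^ (P.eval (n : ℤ)) : Sˣ) : S) with hfdef
  choose L hL using fun m => aux_exists_lim p (fun n => f (m + n))
  have hLt : Tendsto L ↑p (𝓝 t) := aux_iterated p hp f L t ht hL
  have hkey : ∀ m : ℕ, q ∣ m → ((u ^ (P.eval (m : ℤ)) : Sˣ) : S) * t = L m := by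
    intro m hm
    set Q : Polynomial ℤ :=
      (Polynomial.taylor (m : ℤ) P) - P - Polynomial.C (P.eval (m : ℤ)) with hQ
    have hQeval : ∀ x : ℤ, Q.eval x = P.eval (x + (m : ℤ)) - P.eval x - P.eval (m : ℤ) := by
      intro x
      simp [hQ, Polynomial.taylor_eval]
    have hQ0 : Q.coeff 0 = 0 := by
      rw [Polynomial.coeff_zero_eq_eval_zero, hQeval]
      simp [hP0]
    have hhd : ∀ i, d ≤ i → (Polynomial.hasseDeriv i P).eval (m : ℤ) = P.coeff i := by
      intro i hi
      have hdeg : (Polynomial.hasseDeriv i P).natDegree ≤ 0 :=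
        le_trans (Polynomial.natDegree_hasseDeriv_le P i) (by omega)
      rw [Polynomial.eq_C_of_natDegree_le_zero hdeg]
      simp [Polynomial.hasseDeriv_coeff]
    have hQdeg : Q.natDegree ≤ d - 1 := by
      rw [Polynomial.natDegree_le_iff_coeff_eq_zero]
      intro i hi
      have hid : d ≤ i := by omega
      have h1 : Q.coeff i = (Polynomial.hasseDeriv i P).eval (m : ℤ) - P.coeff i := by
        simp only [hQ, Polynomial.coeff_sub, Polynomial.taylor_coeff]
        rw [Polynomial.coeff_C, if_neg (by omega : ¬ i = 0)]
        ring
      rw [h1, hhd i hid]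
      ring
    have hQdvd : ∀ i, (q : ℤ) ∣ Q.coeff i := by
      intro i
      rcases Nat.eq_zero_or_pos i with rfl | hi
      · rw [hQ0]; exact dvd_zero _
      · have h2 : (Polynomial.hasseDeriv i P).eval 0 = P.coeff i := by
          rw [← Polynomial.coeff_zero_eq_eval_zero, Polynomial.hasseDeriv_coeff]
          simp
        have h1 : Q.coeff i = (Polynomial.hasseDeriv i P).eval (m : ℤ) -
            (Polynomial.hasseDeriv i P).eval 0 := by
          rw [h2]
          simp only [hQ, Polynomial.coeff_sub, Polynomial.taylor_coeff]
          rw [Polynomial.coeff_C, if_neg (by omega : ¬ i = 0)]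
          ring
        rw [h1]
        refine dvd_trans (Int.natCast_dvd_natCast.mpr hm) ?_
        simpa using Polynomial.sub_dvd_eval_sub (m : ℤ) 0 (Polynomial.hasseDeriv i P)
    have hQlim : Tendsto (fun n : ℕ => ((u ^ (Q.eval (n : ℤ)) : Sˣ) : S)) ↑p (𝓝 1) :=
      aux_L1 hjoint p u (d - 1) (q : ℤ) hmon (d - 1) Q hQdeg hQdeg hQ0 hQdvd
    have hQlim' : Tendsto (fun n : ℕ => ((u ^ (-Q.eval (n : ℤ)) : Sˣ) : S)) ↑p (𝓝 1) := by
      have h1 := aux_smul_lim hjoint p u _ hQlim (-1)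
      refine h1.congr fun n => ?_
      congr 2
      ring
    have hLm : Tendsto (fun n : ℕ =>
        ((u ^ (-Q.eval (n : ℤ)) : Sˣ) : S) * f (m + n)) ↑p (𝓝 (L m)) :=
      aux_mul_lim hjoint p hQlim' (hL m)
    have heq : ∀ n : ℕ, ((u ^ (-Q.eval (n : ℤ)) : Sˣ) : S) * f (m + n) =
        ((u ^ (P.eval (m : ℤ)) : Sˣ) : S) * ((u ^ (P.eval (n : ℤ)) : Sˣ) : S) := by
      intro n
      show ((u ^ (-Q.eval (n : ℤ)) : Sˣ) : S) * ((u ^ (P.eval ((m + n : ℕ) : ℤ)) : Sˣ) : S) = _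
      rw [← Units.val_mul, ← zpow_add, ← Units.val_mul, ← zpow_add]
      congr 2
      have hc : ((m + n : ℕ) : ℤ) = (n : ℤ) + (m : ℤ) := by push_cast; ring
      rw [hc]
      have h3 := hQeval (n : ℤ)
      linarith
    have hLm' : Tendsto (fun n : ℕ =>
        ((u ^ (P.eval (m : ℤ)) : Sˣ) : S) * ((u ^ (P.eval (n : ℤ)) : Sˣ) : S)) ↑p (𝓝 (L m)) :=
      hLm.congr heq
    have hLm'' : Tendsto (fun n : ℕ =>
        ((u ^ (P.eval (m : ℤ)) : Sˣ) : S) * ((u ^ (P.eval (n : ℤ)) : Sˣ) : S)) ↑p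
        (𝓝 (((u ^ (P.eval (m : ℤ)) : Sˣ) : S) * t)) :=
      ((hl _).tendsto t).comp ht
    exact tendsto_nhds_unique hLm'' hLm'
  have hev : (fun m : ℕ => ((u ^ (P.eval (m : ℤ)) : Sˣ) : S) * t) =ᶠ[↑p] L :=
    Filter.eventually_of_mem (aux_dvd_mem p hp q hq1) fun m hm => hkey m hm
  have h1 : Tendsto (fun m : ℕ => ((u ^ (P.eval (m : ℤ)) : Sˣ) : S) * t) ↑p (𝓝 t) :=
    Filter.Tendsto.congr' hev.symm hLt
  have h2 : Tendsto (fun m : ℕ => ((u ^ (P.eval (m : ℤ)) : Sˣ) : S) * t) ↑p (𝓝 (t * t)) :=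
    ((hr t).tendsto t).comp ht
  exact tendsto_nhds_unique h2 h1
end

section
/- (p-limit van der Corput lemma) Let H be a Hilbert space, (x_n) a bounded sequence in H, and p an idempotent ultrafilter on ℕ. If p-lim_{h∈ℕ} ( p-lim_{n∈ℕ} ⟨x_{n+h}, x_n⟩ ) = 0, then p-lim_{n∈ℕ} x_n = 0 in the weak topology. -/
open Filter Topology

attribute [local instance] Ultrafilter.add

private lemma plim_exists (p : Ultrafilter ℕ) {f : ℕ → ℂ} {R : ℝ} (hf : ∀ n, ‖f n‖ ≤ R) :
    ∃ L : ℂ, Tendsto f ↑p (𝓝 L) := by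
  obtain ⟨L, -, hL⟩ := (isCompact_closedBall (0 : ℂ) R).ultrafilter_le_nhds (p.map f)
    (by
      refine le_principal_iff.mpr ?_
      rw [Ultrafilter.mem_coe, Ultrafilter.mem_map]
      refine Filter.mem_of_superset Filter.univ_mem ?_
      intro n _
      simpa [Metric.mem_closedBall, dist_zero_right] using hf n)
  exact ⟨L, hL⟩

private lemma evtl {p : Ultrafilter ℕ} (hp : p + p = p) {P : ℕ → Prop}
    (hP : ∀ᶠ m in ↑p, P m) : ∀ᶠ u in ↑p, ∀ᶠ v in ↑p, P (u + v) := by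
  rw [← hp] at hP
  exact (Ultrafilter.eventually_add p p P).mp hP

private lemma key {H : Type*} [NormedAddCommGroup H] [InnerProductSpace ℂ H]
    (x : ℕ → H) (p : Ultrafilter ℕ) (hp : p + p = p)
    (c : ℕ → ℂ)
    (hc : ∀ h : ℕ, Tendsto (fun n : ℕ => (inner ℂ (x (n + h)) (x n) : ℂ)) ↑p (𝓝 (c h)))
    (hc0 : Tendsto c ↑p (𝓝 (0 : ℂ)))
    (g : H) (L : ℂ) (hL : Tendsto (fun n : ℕ => (inner ℂ (x n) g : ℂ)) ↑p (𝓝 L))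
    {ε : ℝ} (hε : 0 < ε) (K : ℕ) :
    ∃ h : Fin K → ℕ,
      (∀ i, ∀ᶠ n in ↑p, ‖(inner ℂ (x (n + h i)) g : ℂ) - L‖ ≤ ε) ∧
      (∀ i j, i ≠ j → ∀ᶠ n in ↑p, ‖(inner ℂ (x (n + h i)) (x (n + h j)) : ℂ)‖ ≤ 2 * ε) ∧
      (∀ i, ‖c (h i)‖ ≤ ε) ∧
      (∀ i, ∀ᶠ b in ↑p, ‖c (b + h i)‖ ≤ ε) := by
  induction K with
  | zero => exact ⟨fun i => i.elim0, fun i => i.elim0, fun i => i.elim0, fun i => i.elim0,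
      fun i => i.elim0⟩
  | succ K IH =>
    obtain ⟨h, H1, H2, H3, H4⟩ := IH
    have hV : ∀ᶠ m in ↑p, ‖(inner ℂ (x m) g : ℂ) - L‖ ≤ ε := by
      have := Metric.tendsto_nhds.mp hL ε hε
      exact this.mono fun m hm => by rw [← dist_eq_norm]; exact hm.le
    have hA : ∀ᶠ d in ↑p, ‖c d‖ ≤ ε := by
      have := Metric.tendsto_nhds.mp hc0 ε hε
      exact this.mono fun d hd => by
        have : dist (c d) 0 = ‖c d‖ := dist_zero_right _
        linarith [hd.le, this.symm.le, this.le]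
    have hW : ∀ i : Fin K, ∀ᶠ m in ↑p,
        ‖(inner ℂ (x (m + h i)) (x m) : ℂ)‖ ≤ 2 * ε := by
      intro i
      have h1 := Metric.tendsto_nhds.mp (hc (h i)) ε hε
      refine h1.mono fun m hm => ?_
      have h2 : ‖(inner ℂ (x (m + h i)) (x m) : ℂ) - c (h i)‖ < ε := by
        rwa [← dist_eq_norm]
      calc ‖(inner ℂ (x (m + h i)) (x m) : ℂ)‖
          = ‖((inner ℂ (x (m + h i)) (x m) : ℂ) - c (h i)) + c (h i)‖ := by ring_nf
        _ ≤ ‖(inner ℂ (x (m + h i)) (x m) : ℂ) - c (h i)‖ + ‖c (h i)‖ := norm_add_le _ _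
        _ ≤ 2 * ε := by linarith [H3 i]
    have B1 : ∀ᶠ b in ↑p, ∀ᶠ n in ↑p, ‖(inner ℂ (x (b + n)) g : ℂ) - L‖ ≤ ε := evtl hp hV
    have B2 : ∀ᶠ b in ↑p, ∀ i, ∀ᶠ n in ↑p,
        ‖(inner ℂ (x (b + n + h i)) g : ℂ) - L‖ ≤ ε :=
      eventually_all.mpr fun i => evtl hp (H1 i)
    have B3 : ∀ᶠ b in ↑p, ∀ i j, i ≠ j → ∀ᶠ n in ↑p,
        ‖(inner ℂ (x (b + n + h i)) (x (b + n + h j)) : ℂ)‖ ≤ 2 * ε := by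
      rw [eventually_all]; intro i; rw [eventually_all]; intro j
      by_cases hij : i = j
      · exact Eventually.of_forall fun b hne => absurd hij hne
      · exact (evtl hp (H2 i j hij)).mono fun b hb _ => hb
    have B4 : ∀ᶠ b in ↑p, ∀ i, ∀ᶠ n in ↑p,
        ‖(inner ℂ (x (b + n + h i)) (x (b + n)) : ℂ)‖ ≤ 2 * ε :=
      eventually_all.mpr fun i => evtl hp (hW i)
    have B6 : ∀ᶠ b in ↑p, ∀ i, ‖c (b + h i)‖ ≤ ε := eventually_all.mpr H4
    have B7 : ∀ᶠ b in ↑p, ∀ᶠ β in ↑p, ‖c (b + β)‖ ≤ ε := evtl hp hA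
    have B8 : ∀ᶠ b in ↑p, ∀ i, ∀ᶠ β in ↑p, ‖c (b + β + h i)‖ ≤ ε :=
      eventually_all.mpr fun i => evtl hp (H4 i)
    obtain ⟨b, hb1, hb2, hb3, hb4, hb5, hb6, hb7, hb8⟩ :=
      (B1.and (B2.and (B3.and (B4.and (hA.and (B6.and (B7.and B8))))))).exists
    refine ⟨Fin.cons b (fun i => b + h i), ?_, ?_, ?_, ?_⟩
    · intro i
      obtain rfl | ⟨i', rfl⟩ := Fin.eq_zero_or_eq_succ i
      · simp only [Fin.cons_zero]
        exact hb1.mono fun n hn => by rwa [Nat.add_comm n b]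
      · simp only [Fin.cons_succ]
        exact (hb2 i').mono fun n hn => by
          rwa [show b + n + h i' = n + (b + h i') from by omega] at hn
    · intro i j hij
      obtain rfl | ⟨i', rfl⟩ := Fin.eq_zero_or_eq_succ i <;>
        obtain rfl | ⟨j', rfl⟩ := Fin.eq_zero_or_eq_succ j
      · exact absurd rfl hij
      · simp only [Fin.cons_zero, Fin.cons_succ]
        refine (hb4 j').mono fun n hn => ?_
        rw [norm_inner_symm]
        rwa [show b + n + h j' = n + (b + h j') from by omega,
          show b + n = n + b from by omega] at hn
      · simp only [Fin.cons_zero, Fin.cons_succ]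
        refine (hb4 i').mono fun n hn => ?_
        rwa [show b + n + h i' = n + (b + h i') from by omega,
          show b + n = n + b from by omega] at hn
      · simp only [Fin.cons_succ]
        have hij' : i' ≠ j' := fun e => hij (by rw [e])
        refine (hb3 i' j' hij').mono fun n hn => ?_
        rwa [show b + n + h i' = n + (b + h i') from by omega,
          show b + n + h j' = n + (b + h j') from by omega] at hn
    · intro i
      obtain rfl | ⟨i', rfl⟩ := Fin.eq_zero_or_eq_succ i
      · simpa only [Fin.cons_zero] using hb5
      · simpa only [Fin.cons_succ] using hb6 i'
    · intro i
      obtain rfl | ⟨i', rfl⟩ := Fin.eq_zero_or_eq_succ i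
      · simp only [Fin.cons_zero]
        exact hb7.mono fun β hβ => by rwa [Nat.add_comm b β] at hβ
      · simp only [Fin.cons_succ]
        exact (hb8 i').mono fun β hβ => by
          rwa [show b + β + h i' = β + (b + h i') from by omega] at hβ

/-- `p`-limit van der Corput lemma. Let `H` be a Hilbert space, `(xₙ)` a
bounded sequence in `H`, and `p` an idempotent ultrafilter on `ℕ`. If the iterated
`p`-limit `p-lim_h (p-lim_n ⟨x_{n+h}, x_n⟩)` equals `0`, then `p-lim xₙ = 0` in the weak
topology, i.e. `p-lim ⟨xₙ, g⟩ = 0` for every `g ∈ H`. -/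
theorem vanDerCorput_plim {H : Type*} [NormedAddCommGroup H] [InnerProductSpace ℂ H]
    [CompleteSpace H] (x : ℕ → H) (C : ℝ) (hbdd : ∀ n, ‖x n‖ ≤ C)
    (p : Ultrafilter ℕ) (hp : p + p = p)
    (c : ℕ → ℂ)
    (hc : ∀ h : ℕ, Tendsto (fun n : ℕ => (inner ℂ (x (n + h)) (x n) : ℂ)) ↑p (𝓝 (c h)))
    (hc0 : Tendsto c ↑p (𝓝 (0 : ℂ))) :
    ∀ g : H, Tendsto (fun n : ℕ => (inner ℂ (x n) g : ℂ)) ↑p (𝓝 (0 : ℂ)) := by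
  intro g
  obtain ⟨L, hL⟩ := plim_exists p (f := fun n => (inner ℂ (x n) g : ℂ)) (R := C * ‖g‖)
    (fun n => le_trans (norm_inner_le_norm _ _)
      (mul_le_mul_of_nonneg_right (hbdd n) (norm_nonneg g)))
  suffices hL0 : L = 0 by rwa [hL0] at hL
  -- Step A
  have stepA : ∀ ε : ℝ, 0 < ε → ∀ K : ℕ,
      (K : ℝ) * ‖L‖ ≤ (K : ℝ) * ε + Real.sqrt ((K : ℝ) * C ^ 2 + 2 * (K : ℝ) ^ 2 * ε) * ‖g‖ := by
    intro ε hε K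
    obtain ⟨h, h1, h2, -, -⟩ := key x p hp c hc hc0 g L hL hε K
    have pair : ∀ᶠ n in ↑p, ∀ i j, i ≠ j →
        ‖(inner ℂ (x (n + h i)) (x (n + h j)) : ℂ)‖ ≤ 2 * ε := by
      rw [eventually_all]; intro i; rw [eventually_all]; intro j
      by_cases hij : i = j
      · exact Eventually.of_forall fun n hne => absurd hij hne
      · exact (h2 i j hij).mono fun n hn _ => hn
    obtain ⟨n, hn1, hn2⟩ := ((eventually_all.mpr h1).and pair).exists
    set S : H := ∑ i : Fin K, x (n + h i) with hS
    have hSg : (inner ℂ S g : ℂ) = ∑ i : Fin K, (inner ℂ (x (n + h i)) g : ℂ) := sum_inner _ _ _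
    have e1 : ‖(inner ℂ S g : ℂ) - (K : ℂ) * L‖ ≤ (K : ℝ) * ε := by
      have e0 : (inner ℂ S g : ℂ) - (K : ℂ) * L
          = ∑ i : Fin K, ((inner ℂ (x (n + h i)) g : ℂ) - L) := by
        rw [hSg, Finset.sum_sub_distrib, Finset.sum_const, Finset.card_univ, Fintype.card_fin,
          nsmul_eq_mul]
      rw [e0]
      calc ‖∑ i : Fin K, ((inner ℂ (x (n + h i)) g : ℂ) - L)‖
          ≤ ∑ i : Fin K, ‖(inner ℂ (x (n + h i)) g : ℂ) - L‖ := norm_sum_le _ _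
        _ ≤ ∑ _i : Fin K, ε := Finset.sum_le_sum fun i _ => hn1 i
        _ = (K : ℝ) * ε := by
            rw [Finset.sum_const, Finset.card_univ, Fintype.card_fin, nsmul_eq_mul]
    have hS2 : ‖S‖ ^ 2 ≤ (K : ℝ) * C ^ 2 + 2 * (K : ℝ) ^ 2 * ε := by
      have expand : (‖S‖ : ℝ) ^ 2
          = ∑ i : Fin K, ∑ j : Fin K,
              RCLike.re (inner ℂ (x (n + h i)) (x (n + h j)) : ℂ) := by
        rw [← inner_self_eq_norm_sq (𝕜 := ℂ) S, hS]
        rw [sum_inner, map_sum]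
        refine Finset.sum_congr rfl fun i _ => ?_
        rw [inner_sum, map_sum]
      rw [expand]
      have bound : ∀ i j : Fin K,
          RCLike.re (inner ℂ (x (n + h i)) (x (n + h j)) : ℂ)
            ≤ (if i = j then C ^ 2 else 0) + 2 * ε := by
        intro i j
        by_cases hij : i = j
        · subst hij
          rw [if_pos rfl, inner_self_eq_norm_sq (𝕜 := ℂ)]
          have h1 := hbdd (n + h i)
          nlinarith [norm_nonneg (x (n + h i)), hε.le]
        · simp only [if_neg hij]
          have h1 := RCLike.re_le_norm (inner ℂ (x (n + h i)) (x (n + h j)) : ℂ)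
          have h2 := hn2 i j hij
          linarith
      calc (∑ i : Fin K, ∑ j : Fin K, RCLike.re (inner ℂ (x (n + h i)) (x (n + h j)) : ℂ))
          ≤ ∑ i : Fin K, ∑ j : Fin K, ((if i = j then C ^ 2 else 0) + 2 * ε) :=
            Finset.sum_le_sum fun i _ => Finset.sum_le_sum fun j _ => bound i j
        _ = (K : ℝ) * C ^ 2 + 2 * (K : ℝ) ^ 2 * ε := by
            simp [Finset.sum_add_distrib, Finset.sum_ite_eq, Finset.sum_const,
              Finset.card_univ, nsmul_eq_mul]
            ring
    have hSn : ‖S‖ ≤ Real.sqrt ((K : ℝ) * C ^ 2 + 2 * (K : ℝ) ^ 2 * ε) := by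
      have := Real.sqrt_le_sqrt hS2
      rwa [Real.sqrt_sq (norm_nonneg S)] at this
    have cs : ‖(inner ℂ S g : ℂ)‖ ≤ ‖S‖ * ‖g‖ := norm_inner_le_norm _ _
    have kl : (K : ℝ) * ‖L‖ = ‖(K : ℂ) * L‖ := by
      rw [norm_mul, RCLike.norm_natCast]
    have tri : ‖(K : ℂ) * L‖ ≤ ‖(inner ℂ S g : ℂ) - (K : ℂ) * L‖ + ‖(inner ℂ S g : ℂ)‖ := by
      have := norm_add_le ((K : ℂ) * L - (inner ℂ S g : ℂ)) (inner ℂ S g : ℂ)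
      rw [sub_add_cancel, norm_sub_rev] at this
      exact this
    have mulg : ‖S‖ * ‖g‖ ≤ Real.sqrt ((K : ℝ) * C ^ 2 + 2 * (K : ℝ) ^ 2 * ε) * ‖g‖ :=
      mul_le_mul_of_nonneg_right hSn (norm_nonneg g)
    linarith
  -- Step B
  have stepB : ∀ K : ℕ, (K : ℝ) * ‖L‖ ≤ Real.sqrt ((K : ℝ) * C ^ 2) * ‖g‖ := by
    intro K
    have hcont : Continuous fun ε : ℝ =>
        (K : ℝ) * ε + Real.sqrt ((K : ℝ) * C ^ 2 + 2 * (K : ℝ) ^ 2 * ε) * ‖g‖ := by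
      refine Continuous.add (continuous_const.mul continuous_id) ?_
      exact ((continuous_const.add (continuous_const.mul continuous_id)).sqrt).mul
        continuous_const
    have htd : Tendsto (fun ε : ℝ =>
        (K : ℝ) * ε + Real.sqrt ((K : ℝ) * C ^ 2 + 2 * (K : ℝ) ^ 2 * ε) * ‖g‖)
        (𝓝[>] 0) (𝓝 (Real.sqrt ((K : ℝ) * C ^ 2) * ‖g‖)) := by
      have h0 := (hcont.tendsto 0).mono_left (nhdsWithin_le_nhds (s := Set.Ioi (0 : ℝ)))
      simpa using h0
    refine ge_of_tendsto htd ?_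
    exact eventually_nhdsWithin_of_forall fun ε hε => stepA ε hε K
  -- Step C
  have stepC : ∀ K : ℕ, (K : ℝ) ^ 2 * ‖L‖ ^ 2 ≤ (K : ℝ) * C ^ 2 * ‖g‖ ^ 2 := by
    intro K
    have h1 : ((K : ℝ) * ‖L‖) ^ 2 ≤ (Real.sqrt ((K : ℝ) * C ^ 2) * ‖g‖) ^ 2 := by
      have hnn : 0 ≤ (K : ℝ) * ‖L‖ := by positivity
      exact pow_le_pow_left₀ hnn (stepB K) 2
    have h2 : (Real.sqrt ((K : ℝ) * C ^ 2) * ‖g‖) ^ 2 = (K : ℝ) * C ^ 2 * ‖g‖ ^ 2 := by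
      rw [mul_pow, Real.sq_sqrt (by positivity)]
    calc (K : ℝ) ^ 2 * ‖L‖ ^ 2 = ((K : ℝ) * ‖L‖) ^ 2 := by ring
      _ ≤ (Real.sqrt ((K : ℝ) * C ^ 2) * ‖g‖) ^ 2 := h1
      _ = (K : ℝ) * C ^ 2 * ‖g‖ ^ 2 := h2
  by_contra hL0
  have hpos : 0 < ‖L‖ ^ 2 := by
    have := norm_pos_iff.mpr hL0
    positivity
  obtain ⟨K, hK⟩ := exists_nat_gt (C ^ 2 * ‖g‖ ^ 2 / ‖L‖ ^ 2)
  have hK1 : (C ^ 2 * ‖g‖ ^ 2 / ‖L‖ ^ 2) < (K + 1 : ℕ) := by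
    push_cast
    push_cast at hK
    linarith
  have hlt : C ^ 2 * ‖g‖ ^ 2 < ((K + 1 : ℕ) : ℝ) * ‖L‖ ^ 2 := by
    rw [div_lt_iff₀ hpos] at hK1
    linarith
  have hle := stepC (K + 1)
  have hKpos : (0 : ℝ) < ((K + 1 : ℕ) : ℝ) := by positivity
  nlinarith
end

section
/- Let U be a unitary operator on a Hilbert space H and let p be an idempotent ultrafilter on ℕ. Then W := p-lim_{n∈ℕ} U^n (limit in the weak operator topology) is an orthogonal projection, and H decomposes as H = H_r ⊕ H_m, where H_r = {f ∈ H : p-lim U^n f = f} and H_m = {f ∈ H : p-lim U^n f = 0} (limits in the weak topology). -/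
open Filter Topology

attribute [local instance] Ultrafilter.add

/-- Let `U` be a unitary operator on a Hilbert space `H` and `p` an
idempotent ultrafilter on `ℕ`. If `W = p-lim Uⁿ` in the weak operator topology, then `W` is
an orthogonal projection (idempotent and self-adjoint), and `H` decomposes as
`H = H_r ⊕ H_m` where `H_r = {f : p-lim Uⁿ f = f}` and `H_m = {f : p-lim Uⁿ f = 0}`
(weak limits): every `f ∈ H` is uniquely the sum of an element of `H_r` and an element of
`H_m`. -/
theorem plim_unitary_orthogonal_projection {H : Type*} [NormedAddCommGroup H]
    [InnerProductSpace ℂ H] [CompleteSpace H]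
    (U : H →L[ℂ] H)
    (hU : ∀ f g : H, (inner ℂ (U f) (U g) : ℂ) = inner ℂ f g)
    (hUsurj : Function.Surjective U)
    (p : Ultrafilter ℕ) (hp : p + p = p)
    (W : H →L[ℂ] H)
    (hW : ∀ f g : H, Tendsto (fun n : ℕ => (inner ℂ ((U ^ n) f) g : ℂ)) ↑p (𝓝 (inner ℂ (W f) g))) :
    W.comp W = W ∧ (∀ f g : H, (inner ℂ (W f) g : ℂ) = inner ℂ f (W g)) ∧
      ∀ f : H, ∃! q : H × H,
        (∀ g : H, Tendsto (fun n : ℕ => (inner ℂ ((U ^ n) q.1) g : ℂ)) ↑p (𝓝 (inner ℂ q.1 g))) ∧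
        (∀ g : H, Tendsto (fun n : ℕ => (inner ℂ ((U ^ n) q.2) g : ℂ)) ↑p (𝓝 (0 : ℂ))) ∧
        f = q.1 + q.2 := by
  -- U^n preserves inner ℂ products
  have hUn : ∀ (n : ℕ) (f g : H), (inner ℂ ((U ^ n) f) ((U ^ n) g) : ℂ) = inner ℂ f g := by
    intro n
    induction n with
    | zero => intro f g; simp
    | succ n ih =>
      intro f g
      have : U ^ (n + 1) = U.comp (U ^ n) := by rw [pow_succ']; rfl
      simp only [this, ContinuousLinearMap.comp_apply]
      rw [hU, ih]
  have hUnorm : ∀ (n : ℕ) (f : H), ‖(U ^ n) f‖ = ‖f‖ := by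
    intro n f
    have := hUn n f f
    rw [inner_self_eq_norm_sq_to_K, inner_self_eq_norm_sq_to_K] at this
    have h2 : ‖(U ^ n) f‖ ^ 2 = ‖f‖ ^ 2 := by exact_mod_cast this
    nlinarith [norm_nonneg ((U ^ n) f), norm_nonneg f]
  -- shift lemma
  have hshift : ∀ (n : ℕ) (f g : H),
      Tendsto (fun m : ℕ => (inner ℂ ((U ^ (n + m)) f) g : ℂ)) ↑p
        (𝓝 (inner ℂ ((U ^ n) (W f)) g)) := by
    intro n f g
    have h := hW f ((ContinuousLinearMap.adjoint (U ^ n)) g)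
    have e1 : ∀ m : ℕ, (inner ℂ ((U ^ m) f) ((ContinuousLinearMap.adjoint (U ^ n)) g) : ℂ)
        = inner ℂ ((U ^ (n + m)) f) g := by
      intro m
      rw [ContinuousLinearMap.adjoint_inner_right, pow_add]
      rfl
    have e2 : (inner ℂ (W f) ((ContinuousLinearMap.adjoint (U ^ n)) g) : ℂ)
        = inner ℂ ((U ^ n) (W f)) g := ContinuousLinearMap.adjoint_inner_right _ _ _
    rw [e2] at h
    exact h.congr e1
  -- closed bound passes to p-limits
  have hbd : ∀ (c : ℕ → ℂ) (L x : ℂ) (ε : ℝ), Tendsto c ↑p (𝓝 L) →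
      (∀ᶠ m in ↑p, dist (c m) x ≤ ε) → dist L x ≤ ε := by
    intro c L x ε hc hle
    exact le_of_tendsto (hc.dist tendsto_const_nhds) hle
  -- key: p-lim of U^n (W f) is W f weakly
  have hDfix : ∀ f g : H, Tendsto (fun n : ℕ => (inner ℂ ((U ^ n) (W f)) g : ℂ)) ↑p
      (𝓝 (inner ℂ (W f) g)) := by
    intro f g
    rw [Metric.tendsto_nhds]
    intro ε hε
    have hε2 : (0 : ℝ) < ε / 2 := by linarith
    have h1 : ∀ᶠ k in ↑p, dist (inner ℂ ((U ^ k) f) g : ℂ) (inner ℂ (W f) g) ≤ ε / 2 := by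
      filter_upwards [(hW f g) (Metric.closedBall_mem_nhds _ hε2)] with k hk using hk
    have h2 : ∀ᶠ k in ↑(p + p), dist (inner ℂ ((U ^ k) f) g : ℂ) (inner ℂ (W f) g) ≤ ε / 2 := by
      rwa [hp]
    rw [Ultrafilter.eventually_add] at h2
    filter_upwards [h2] with n hn
    have hb : dist (inner ℂ ((U ^ n) (W f)) g : ℂ) (inner ℂ (W f) g) ≤ ε / 2 :=
      hbd _ _ _ _ (hshift n f g) hn
    linarith [hb]
  -- W ∘ W = W
  have hW2 : ∀ f : H, W (W f) = W f := by
    intro f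
    apply ext_inner_right ℂ
    intro g
    exact tendsto_nhds_unique (hW (W f) g) (hDfix f g)
  -- norm bound
  have hWnorm : ∀ f : H, ‖W f‖ ≤ ‖f‖ := by
    intro f
    have h1 : ∀ᶠ n in ↑p, dist (inner ℂ ((U ^ n) f) (W f) : ℂ) 0 ≤ ‖f‖ * ‖W f‖ := by
      apply Eventually.of_forall
      intro n
      rw [dist_zero_right]
      calc ‖(inner ℂ ((U ^ n) f) (W f) : ℂ)‖ ≤ ‖(U ^ n) f‖ * ‖W f‖ := norm_inner_le_norm _ _
        _ = ‖f‖ * ‖W f‖ := by rw [hUnorm]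
    have h2 : dist (inner ℂ (W f) (W f) : ℂ) 0 ≤ ‖f‖ * ‖W f‖ := hbd _ _ _ _ (hW f (W f)) h1
    rw [dist_zero_right, inner_self_eq_norm_sq_to_K] at h2
    have h3 : ‖W f‖ ^ 2 ≤ ‖f‖ * ‖W f‖ := by
      calc ‖W f‖ ^ 2 = ‖((‖W f‖ : ℂ)) ^ 2‖ := by
            rw [norm_pow, Complex.norm_real, Real.norm_eq_abs, abs_norm]
        _ ≤ ‖f‖ * ‖W f‖ := h2
    rcases eq_or_lt_of_le (norm_nonneg (W f)) with h | h
    · rw [← h]; exact norm_nonneg f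
    · nlinarith
  -- orthogonality of fixed vecs and killed vecs
  have horth : ∀ a b : H, W a = a → W b = 0 → (inner ℂ a b : ℂ) = 0 := by
    intro a b ha hb
    have key : ∀ t : ℂ, ‖a‖ ≤ ‖a + t • b‖ := by
      intro t
      have : W (a + t • b) = a := by rw [map_add, map_smul, ha, hb, smul_zero, add_zero]
      calc ‖a‖ = ‖W (a + t • b)‖ := by rw [this]
        _ ≤ ‖a + t • b‖ := hWnorm _
    set c : ℂ := inner ℂ a b with hc
    by_contra hne
    have hcpos : 0 < ‖c‖ := norm_pos_iff.mpr hne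
    set s : ℝ := 1 / (‖b‖ ^ 2 + 1) with hs
    have hspos : 0 < s := by positivity
    have hslt : s * ‖b‖ ^ 2 < 1 := by
      rw [hs, div_mul_eq_mul_div, one_mul, div_lt_one (by positivity)]
      linarith
    set t : ℂ := -(s : ℂ) * (starRingEnd ℂ) c with ht
    have hkey := key t
    have hsq : ‖a‖ ^ 2 ≤ ‖a + t • b‖ ^ 2 := by
      have := key t
      nlinarith [norm_nonneg (a + t • b), norm_nonneg a]
    rw [@norm_add_sq ℂ] at hsq
    have hin : (inner ℂ a (t • b) : ℂ) = t * c := by rw [inner_smul_right]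
    have htc : t * c = ((-s * ‖c‖ ^ 2 : ℝ) : ℂ) := by
      rw [ht, mul_assoc, Complex.conj_mul']
      push_cast
      ring
    rw [hin, htc] at hsq
    have hre : RCLike.re (((-s * ‖c‖ ^ 2 : ℝ) : ℂ)) = -s * ‖c‖ ^ 2 := RCLike.ofReal_re _
    have hnt : ‖t • b‖ ^ 2 = s ^ 2 * ‖c‖ ^ 2 * ‖b‖ ^ 2 := by
      rw [norm_smul, mul_pow, ht]
      have : ‖-(s : ℂ) * (starRingEnd ℂ) c‖ = s * ‖c‖ := by
        rw [norm_mul, norm_neg, Complex.norm_real, Real.norm_eq_abs, abs_of_pos hspos]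
        simp
      rw [this]; ring
    rw [hre, hnt] at hsq
    nlinarith [mul_pos hspos (pow_pos hcpos 2), sq_nonneg (‖c‖ * s)]
  -- self-adjointness
  have hsa : ∀ f g : H, (inner ℂ (W f) g : ℂ) = inner ℂ f (W g) := by
    intro f g
    have h1 : (inner ℂ (W f) (g - W g) : ℂ) = 0 :=
      horth (W f) (g - W g) (hW2 f) (by rw [map_sub, hW2, sub_self])
    have h2 : (inner ℂ (f - W f) (W g) : ℂ) = 0 := by
      have := horth (W g) (f - W f) (hW2 g) (by rw [map_sub, hW2, sub_self])
      rw [← inner_conj_symm, this, map_zero]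
    have e1 : (inner ℂ (W f) g : ℂ) = inner ℂ (W f) (W g) := by
      have := inner_sub_right (𝕜 := ℂ) (W f) g (W g)
      rw [h1] at this
      linear_combination -this
    have e2 : (inner ℂ f (W g) : ℂ) = inner ℂ (W f) (W g) := by
      have := inner_sub_left (𝕜 := ℂ) f (W f) (W g)
      rw [h2] at this
      linear_combination -this
    rw [e1, e2]
  refine ⟨?_, hsa, ?_⟩
  · ext f; exact hW2 f
  · intro f
    refine ⟨(W f, f - W f), ⟨?_, ?_, ?_⟩, ?_⟩
    · intro g; exact hDfix f g
    · intro g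
      have h := hW (f - W f) g
      have : W (f - W f) = 0 := by rw [map_sub, hW2, sub_self]
      rw [this, inner_zero_left] at h
      exact h
    · simp
    · rintro ⟨a, b⟩ ⟨h1, h2, h3⟩
      have ha : W a = a := by
        apply ext_inner_right ℂ
        intro g
        exact tendsto_nhds_unique (hW a g) (h1 g)
      have hb : W b = 0 := by
        apply ext_inner_right ℂ
        intro g
        rw [inner_zero_left]
        exact tendsto_nhds_unique (hW b g) (h2 g)
      have hWf : W f = a := by rw [h3, map_add, ha, hb, add_zero]
      have : b = f - W f := by rw [hWf, h3]; abel
      simp [hWf, this]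
end

section
/- Let U be a unitary operator on a Hilbert space H, p an idempotent ultrafilter on ℕ, and f ∈ H with f* := p-lim_{n∈ℕ} U^n f (weak limit). Then f* is a rigid vector for U: there exists an increasing sequence (n_k) with U^{n_k} f* → f* in norm. -/
open Filter Topology

attribute [local instance] Ultrafilter.add

lemma exists_strictMono_mem_aux (A : ℕ → Set ℕ+) (hA : ∀ k, (A k).Infinite) :
    ∃ nk : ℕ → ℕ+, StrictMono nk ∧ ∀ k, nk k ∈ A k := by
  choose g hg hg' using fun k (m : ℕ+) => (hA k).exists_gt m
  obtain ⟨a, ha⟩ := (hA 0).nonempty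
  refine ⟨fun k => Nat.rec a (fun k prev => g (k + 1) prev) k, ?_, ?_⟩
  · exact strictMono_nat_of_lt_succ fun k => hg' _ _
  · intro k
    cases k with
    | zero => exact ha
    | succ k => exact hg _ _

lemma idem_free (p : Ultrafilter ℕ+) (hp : p + p = p) : ∀ s ∈ p, s.Infinite := by
  intro s hs
  by_contra h
  rw [Set.not_infinite] at h
  have hfin := h
  obtain ⟨a, -, rfl⟩ := Ultrafilter.eq_pure_of_finite_mem hfin hs
  have h1 : ∀ᶠ m in ↑((pure a : Ultrafilter ℕ+) + pure a), m = a := by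
    rw [hp]; exact eventually_pure.2 rfl
  have h2 := (Ultrafilter.eventually_add (pure a) (pure a) (fun m => m = a)).mp h1
  have h3 : a + a = a := by
    have := eventually_pure.1 h2
    exact eventually_pure.1 this
  have h4 : (a : ℕ) + (a : ℕ) = (a : ℕ) := by rw [← PNat.add_coe, h3]
  have h5 : 0 < (a : ℕ) := a.property
  omega

/-- Let `U` be a unitary operator on a Hilbert space `H`, `p` an
idempotent ultrafilter on the positive natural numbers, and `f ∈ H` with
`f* = p-lim Uⁿ f` (weak limit). Then `f*` is a rigid vector for `U`: there is an increasing
sequence `(n_k)` with `U^{n_k} f* → f*` in norm. -/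
theorem plim_is_rigid_vector {H : Type*} [NormedAddCommGroup H]
    [InnerProductSpace ℂ H] [CompleteSpace H]
    (U : H →L[ℂ] H)
    (hU : ∀ f g : H, (inner ℂ (U f) (U g) : ℂ) = inner ℂ f g)
    (hUsurj : Function.Surjective U)
    (p : Ultrafilter ℕ+) (hp : p + p = p) (f fstar : H)
    (hf : ∀ g : H,
      Tendsto (fun n : ℕ+ => (inner ℂ ((U ^ (n : ℕ)) f) g : ℂ)) ↑p (𝓝 (inner ℂ fstar g))) :
    ∃ nk : ℕ → ℕ+, StrictMono nk ∧
      Tendsto (fun k : ℕ => (U ^ ((nk k : ℕ))) fstar) atTop (𝓝 fstar) := by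
  -- powers of U preserve the inner ℂ product
  have hip : ∀ (n : ℕ) (x y : H), (inner ℂ ((U ^ n) x) ((U ^ n) y) : ℂ) = inner ℂ x y := by
    intro n
    induction n with
    | zero => intro x y; simp
    | succ n ih =>
      intro x y
      have hx : (U ^ (n + 1)) x = (U ^ n) (U x) := by
        rw [pow_succ]; rfl
      have hy : (U ^ (n + 1)) y = (U ^ n) (U y) := by
        rw [pow_succ]; rfl
      rw [hx, hy, ih, hU]
  -- norm preservation
  have hnorm : ∀ (n : ℕ) (x : H), ‖(U ^ n) x‖ = ‖x‖ := by
    intro n x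
    rw [@norm_eq_sqrt_re_inner ℂ, @norm_eq_sqrt_re_inner ℂ _ _ _ _ x, hip]
  -- f* is the weak p-limit of U^n f*
  have hstar : ∀ g : H,
      Tendsto (fun n : ℕ+ => (inner ℂ ((U ^ (n : ℕ)) fstar) g : ℂ)) ↑p (𝓝 (inner ℂ fstar g)) := by
    intro g
    rw [Metric.tendsto_nhds]
    intro ε hε
    have h2 : ∀ᶠ (k : ℕ+) in (p : Filter ℕ+), dist (inner ℂ ((U ^ (k : ℕ)) f) g : ℂ) (inner ℂ fstar g) < ε / 2 :=
      Metric.tendsto_nhds.mp (hf g) (ε / 2) (by positivity)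
    rw [← hp] at h2
    have h2' := (Ultrafilter.eventually_add p p _).mp h2
    filter_upwards [h2'] with n hn
    have hlim : Tendsto (fun m : ℕ+ => (inner ℂ ((U ^ (((n + m : ℕ+)) : ℕ)) f) g : ℂ)) ↑p
        (𝓝 (inner ℂ ((U ^ (n : ℕ)) fstar) g)) := by
      have key : ∀ x : H, (inner ℂ x ((ContinuousLinearMap.adjoint (U ^ (n : ℕ))) g) : ℂ)
          = inner ℂ ((U ^ (n : ℕ)) x) g := fun x =>
        ContinuousLinearMap.adjoint_inner_right _ _ _
      have h3 := hf ((ContinuousLinearMap.adjoint (U ^ (n : ℕ))) g)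
      rw [key] at h3
      refine h3.congr fun m => ?_
      rw [key]
      congr 1
      have : ((n + m : ℕ+) : ℕ) = (n : ℕ) + (m : ℕ) := rfl
      rw [this, pow_add]
      rfl
    have hd : Tendsto (fun m : ℕ+ =>
        dist (inner ℂ ((U ^ (((n + m : ℕ+)) : ℕ)) f) g : ℂ) (inner ℂ fstar g)) ↑p
        (𝓝 (dist (inner ℂ ((U ^ (n : ℕ)) fstar) g : ℂ) (inner ℂ fstar g))) :=
      hlim.dist tendsto_const_nhds
    have hle : dist (inner ℂ ((U ^ (n : ℕ)) fstar) g : ℂ) (inner ℂ fstar g) ≤ ε / 2 :=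
      le_of_tendsto hd (hn.mono fun m hm => hm.le)
    linarith
  -- strong convergence along p : ‖U^n f* - f*‖ → 0
  have hre : Tendsto (fun n : ℕ+ => (inner ℂ ((U ^ (n : ℕ)) fstar) fstar : ℂ).re) ↑p
      (𝓝 ((inner ℂ fstar fstar : ℂ).re)) :=
    (Complex.continuous_re.tendsto _).comp (hstar fstar)
  have hsq : Tendsto (fun n : ℕ+ => ‖(U ^ (n : ℕ)) fstar - fstar‖ ^ 2) ↑p (𝓝 0) := by
    have heq : ∀ n : ℕ+, ‖(U ^ (n : ℕ)) fstar - fstar‖ ^ 2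
        = 2 * ‖fstar‖ ^ 2 - 2 * (inner ℂ ((U ^ (n : ℕ)) fstar) fstar : ℂ).re := by
      intro n
      have := @norm_sub_sq ℂ _ _ _ _ ((U ^ (n : ℕ)) fstar) fstar
      rw [this, hnorm]
      simp [RCLike.re_to_complex]
      ring
    have hlim2 : Tendsto (fun n : ℕ+ =>
        2 * ‖fstar‖ ^ 2 - 2 * (inner ℂ ((U ^ (n : ℕ)) fstar) fstar : ℂ).re) ↑p (𝓝 0) := by
      have : (0 : ℝ) = 2 * ‖fstar‖ ^ 2 - 2 * (inner ℂ fstar fstar : ℂ).re := by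
        have := @inner_self_eq_norm_sq ℂ _ _ _ _ fstar
        rw [RCLike.re_to_complex] at this
        rw [this]; ring
      rw [this]
      exact tendsto_const_nhds.sub (hre.const_mul 2)
    exact hlim2.congr fun n => (heq n).symm
  have hzero : Tendsto (fun n : ℕ+ => ‖(U ^ (n : ℕ)) fstar - fstar‖) ↑p (𝓝 0) := by
    have := hsq.sqrt
    rw [Real.sqrt_zero] at this
    refine this.congr fun n => ?_
    exact Real.sqrt_sq (norm_nonneg _)
  -- extract a strictly increasing sequence
  have hA : ∀ k : ℕ, {n : ℕ+ | ‖(U ^ (n : ℕ)) fstar - fstar‖ < 1 / (k + 1)} ∈ p := by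
    intro k
    exact hzero (gt_mem_nhds (by positivity))
  obtain ⟨nk, hmono, hmem⟩ := exists_strictMono_mem_aux _ (fun k => idem_free p hp _ (hA k))
  refine ⟨nk, hmono, ?_⟩
  rw [tendsto_iff_norm_sub_tendsto_zero]
  refine squeeze_zero (fun k => norm_nonneg _) (fun k => (hmem k).le) ?_
  exact tendsto_one_div_add_atTop_nhds_zero_nat
end

section
/- Let σ be a probability Borel measure on S¹, V_σ the unitary operator on L²(S¹,σ) given by (V_σ f)(z) = z f(z), p an ultrafilter on ℕ, and P ∈ ℤ[x] with P(0)=0. Then p-lim_{n∈ℕ} V_σ^{P(n)} = Id (in the weak operator topology) if and only if p-lim_{n∈ℕ} σ̂(P(n)) = 1, where σ̂(k) = ∫ z^k dσ(z). -/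
open Filter Topology MeasureTheory

noncomputable instance : MeasurableSpace Circle := borel Circle

instance : BorelSpace Circle := ⟨rfl⟩

lemma cont_e (m : ℤ) : Continuous (fun z : Circle => ((z ^ m : Circle) : ℂ)) :=
  continuous_subtype_val.comp (continuous_zpow m)

lemma norm_e (m : ℤ) (z : Circle) : ‖((z ^ m : Circle) : ℂ)‖ = 1 := by
  rw [Circle.norm_coe]

lemma integrable_e (σ : Measure Circle) [IsProbabilityMeasure σ] (m : ℤ) :
    Integrable (fun z : Circle => ((z ^ m : Circle) : ℂ)) σ :=
  (cont_e m).integrable_of_hasCompactSupport (HasCompactSupport.of_compactSpace _)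

lemma norm_sub_one_sq (w : ℂ) (hw : ‖w‖ = 1) : ‖w - 1‖ ^ 2 = 2 - 2 * w.re := by
  have := @norm_sub_sq ℂ ℂ _ _ _ w 1
  simp only [RCLike.inner_apply, starRingEnd_apply, norm_one, one_pow, mul_one] at this
  rw [this, hw]
  simp [Complex.mul_re, Complex.conj_re, Complex.conj_im]
  ring

lemma tendsto_int_norm (σ : Measure Circle) [IsProbabilityMeasure σ] (p : Filter ℕ) (k : ℕ → ℤ)
    (hσ : Tendsto (fun n => ∫ z, ((z ^ (k n) : Circle) : ℂ) ∂σ) p (𝓝 1)) :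
    Tendsto (fun n => ∫ z, ‖((z ^ (k n) : Circle) : ℂ) - 1‖ ∂σ) p (𝓝 0) := by
  have hre : Tendsto (fun n => (∫ z, ((z ^ (k n) : Circle) : ℂ) ∂σ).re) p (𝓝 1) := by
    have := (Complex.continuous_re.tendsto 1).comp hσ
    simpa [Function.comp_def] using this
  have heq : ∀ n, ∫ z, ‖((z ^ (k n) : Circle) : ℂ) - 1‖ ^ 2 ∂σ
      = 2 - 2 * (∫ z, ((z ^ (k n) : Circle) : ℂ) ∂σ).re := by
    intro n
    have h1 : (fun z : Circle => ‖((z ^ (k n) : Circle) : ℂ) - 1‖ ^ 2)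
        = fun z : Circle => 2 - 2 * (((z ^ (k n) : Circle) : ℂ)).re := by
      funext z; exact norm_sub_one_sq _ (norm_e _ z)
    have h2 : Integrable (fun z : Circle => (((z ^ (k n) : Circle) : ℂ)).re) σ :=
      (integrable_e σ (k n)).re
    have h3 : ∫ z, (((z ^ (k n) : Circle) : ℂ)).re ∂σ
        = (∫ z, ((z ^ (k n) : Circle) : ℂ) ∂σ).re := integral_re (integrable_e σ (k n))
    rw [h1, integral_sub (integrable_const 2) (h2.const_mul 2),
      integral_const, integral_const_mul, h3]
    simp
  have hsq : Tendsto (fun n => ∫ z, ‖((z ^ (k n) : Circle) : ℂ) - 1‖ ^ 2 ∂σ) p (𝓝 0) := by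
    simp only [heq]
    have := (tendsto_const_nhds (x := (2:ℝ)) (f := p)).sub (hre.const_mul 2)
    simpa using this
  rw [Metric.tendsto_nhds]
  intro ε hε
  have hε2 : (0:ℝ) < ε/2 := by positivity
  have hev : ∀ᶠ n in p, ∫ z, ‖((z ^ (k n) : Circle) : ℂ) - 1‖ ^ 2 ∂σ < ε/2 * (ε/2) := by
    have : (0:ℝ) < ε/2 * (ε/2) := by positivity
    exact hsq.eventually_lt_const this
  filter_upwards [hev] with n hn
  have hcont : Continuous (fun z : Circle => ‖((z ^ (k n) : Circle) : ℂ) - 1‖) :=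
    ((cont_e (k n)).sub continuous_const).norm
  have hint1 : Integrable (fun z : Circle => ‖((z ^ (k n) : Circle) : ℂ) - 1‖) σ :=
    hcont.integrable_of_hasCompactSupport (HasCompactSupport.of_compactSpace _)
  have hint2 : Integrable (fun z : Circle => ‖((z ^ (k n) : Circle) : ℂ) - 1‖ ^ 2) σ :=
    (hcont.pow 2).integrable_of_hasCompactSupport (HasCompactSupport.of_compactSpace _)
  have hbd : ∀ z : Circle, ‖((z ^ (k n) : Circle) : ℂ) - 1‖
      ≤ ε/2 + ‖((z ^ (k n) : Circle) : ℂ) - 1‖ ^ 2 / (ε/2) := by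
    intro z
    set a := ‖((z ^ (k n) : Circle) : ℂ) - 1‖ with ha
    have ha0 : 0 ≤ a := norm_nonneg _
    rcases le_or_gt a (ε/2) with h | h
    · have : 0 ≤ a ^ 2 / (ε/2) := by positivity
      linarith
    · have h1 : a * (ε/2) ≤ a ^ 2 := by nlinarith
      have : a ≤ a ^ 2 / (ε/2) := (le_div_iff₀ hε2).2 h1
      linarith
  have hle : ∫ z, ‖((z ^ (k n) : Circle) : ℂ) - 1‖ ∂σ
      ≤ ε/2 + (∫ z, ‖((z ^ (k n) : Circle) : ℂ) - 1‖ ^ 2 ∂σ) / (ε/2) := by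
    have := integral_mono hint1 ((integrable_const (ε/2)).add (hint2.div_const (ε/2))) hbd
    simp only [Pi.add_apply] at this
    rwa [integral_add (integrable_const (ε/2)) (hint2.div_const (ε/2)), integral_const,
      integral_div, probReal_univ, smul_eq_mul, one_mul] at this
  have hpos : 0 ≤ ∫ z, ‖((z ^ (k n) : Circle) : ℂ) - 1‖ ∂σ :=
    integral_nonneg fun z => norm_nonneg _
  rw [Real.dist_eq, sub_zero, abs_of_nonneg hpos]
  have : (∫ z, ‖((z ^ (k n) : Circle) : ℂ) - 1‖ ^ 2 ∂σ) / (ε/2) < ε/2 :=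
    (div_lt_iff₀ hε2).2 hn
  linarith

lemma key_s13 (σ : Measure Circle) [IsProbabilityMeasure σ] (p : Filter ℕ) (k : ℕ → ℤ)
    (hσ : Tendsto (fun n => ∫ z, ((z ^ (k n) : Circle) : ℂ) ∂σ) p (𝓝 1))
    (h : Circle → ℂ) (hh : Integrable h σ) :
    Tendsto (fun n => ∫ z, ((z ^ (k n) : Circle) : ℂ) * h z ∂σ) p (𝓝 (∫ z, h z ∂σ)) := by
  have hN := tendsto_int_norm σ p k hσ
  rw [Metric.tendsto_nhds]
  intro ε hε
  obtain ⟨φ, hφlt, hφmem⟩ := (memLp_one_iff_integrable.2 hh).exists_simpleFunc_eLpNorm_sub_lt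
      ENNReal.one_ne_top (ε := ENNReal.ofReal (ε/4)) (by simp [ENNReal.ofReal_eq_zero]; positivity)
  obtain ⟨C, hC⟩ := φ.exists_forall_norm_le
  have hC0 : (0:ℝ) ≤ C := le_trans (norm_nonneg _) (hC 1)
  have hφint : Integrable (⇑φ) σ := memLp_one_iff_integrable.1 hφmem
  have hsub : Integrable (fun z => h z - φ z) σ := hh.sub hφint
  have hsubnorm : ∫ z, ‖h z - φ z‖ ∂σ < ε/4 := by
    have h1 : ENNReal.ofReal (∫ z, ‖h z - φ z‖ ∂σ) = ∫⁻ z, ‖h z - φ z‖ₑ ∂σ :=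
      ofReal_integral_norm_eq_lintegral_enorm hsub
    have h2 : eLpNorm (h - ⇑φ) 1 σ = ∫⁻ z, ‖h z - φ z‖ₑ ∂σ := by
      rw [eLpNorm_one_eq_lintegral_enorm]; rfl
    rw [← ENNReal.ofReal_lt_ofReal_iff (by positivity), h1, ← h2]
    exact hφlt
  have hev : ∀ᶠ n in p, ∫ z, ‖((z ^ (k n) : Circle) : ℂ) - 1‖ ∂σ < ε/(2*(C+1)) :=
    hN.eventually_lt_const (by positivity)
  filter_upwards [hev] with n hn
  have hintE : Integrable (fun z : Circle => ((z ^ (k n) : Circle) : ℂ) * h z) σ :=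
    hh.bdd_mul (cont_e (k n)).aestronglyMeasurable (Eventually.of_forall fun z => le_of_eq (norm_e _ z))
  rw [dist_eq_norm, ← integral_sub hintE hh]
  have hnormle : ‖∫ z, (((z ^ (k n) : Circle) : ℂ) * h z - h z) ∂σ‖
      ≤ ∫ z, ‖((z ^ (k n) : Circle) : ℂ) * h z - h z‖ ∂σ := norm_integral_le_integral_norm _
  have hcontnorm : Continuous (fun z : Circle => ‖((z ^ (k n) : Circle) : ℂ) - 1‖) :=
    ((cont_e (k n)).sub continuous_const).norm
  have hintN : Integrable (fun z : Circle => ‖((z ^ (k n) : Circle) : ℂ) - 1‖) σ :=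
    hcontnorm.integrable_of_hasCompactSupport (HasCompactSupport.of_compactSpace _)
  have hptle : ∀ z : Circle, ‖((z ^ (k n) : Circle) : ℂ) * h z - h z‖
      ≤ 2 * ‖h z - φ z‖ + C * ‖((z ^ (k n) : Circle) : ℂ) - 1‖ := by
    intro z
    have e1 : ((z ^ (k n) : Circle) : ℂ) * h z - h z = (((z ^ (k n) : Circle) : ℂ) - 1) * h z := by
      ring
    have e2 : ‖((z ^ (k n) : Circle) : ℂ) - 1‖ ≤ 2 := by
      calc ‖((z ^ (k n) : Circle) : ℂ) - 1‖ ≤ ‖((z ^ (k n) : Circle) : ℂ)‖ + ‖(1:ℂ)‖ :=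
            norm_sub_le _ _
        _ = 2 := by rw [norm_e, norm_one]; norm_num
    calc ‖((z ^ (k n) : Circle) : ℂ) * h z - h z‖
        = ‖((z ^ (k n) : Circle) : ℂ) - 1‖ * ‖h z‖ := by rw [e1, norm_mul]
      _ ≤ ‖((z ^ (k n) : Circle) : ℂ) - 1‖ * (‖h z - φ z‖ + ‖φ z‖) := by
          apply mul_le_mul_of_nonneg_left _ (norm_nonneg _)
          calc ‖h z‖ = ‖(h z - φ z) + φ z‖ := by ring_nf
            _ ≤ ‖h z - φ z‖ + ‖φ z‖ := norm_add_le _ _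
      _ = ‖((z ^ (k n) : Circle) : ℂ) - 1‖ * ‖h z - φ z‖
            + ‖((z ^ (k n) : Circle) : ℂ) - 1‖ * ‖φ z‖ := by ring
      _ ≤ 2 * ‖h z - φ z‖ + C * ‖((z ^ (k n) : Circle) : ℂ) - 1‖ := by
          nlinarith [mul_nonneg (sub_nonneg.2 e2) (norm_nonneg (h z - φ z)),
            mul_nonneg (norm_nonneg (((z ^ (k n) : Circle) : ℂ) - 1)) (sub_nonneg.2 (hC z))]
  have hintLHS : Integrable (fun z : Circle => ‖((z ^ (k n) : Circle) : ℂ) * h z - h z‖) σ :=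
    (hintE.sub hh).norm
  have hintRHS : Integrable
      (fun z : Circle => 2 * ‖h z - φ z‖ + C * ‖((z ^ (k n) : Circle) : ℂ) - 1‖) σ :=
    (hsub.norm.const_mul 2).add (hintN.const_mul C)
  have hIle : ∫ z, ‖((z ^ (k n) : Circle) : ℂ) * h z - h z‖ ∂σ
      ≤ 2 * (∫ z, ‖h z - φ z‖ ∂σ) + C * ∫ z, ‖((z ^ (k n) : Circle) : ℂ) - 1‖ ∂σ := by
    have := integral_mono hintLHS hintRHS hptle
    rwa [integral_add (hsub.norm.const_mul 2) (hintN.const_mul C), integral_const_mul,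
      integral_const_mul] at this
  have hC1 : C * (ε/(2*(C+1))) ≤ ε/2 := by
    have hq : (0:ℝ) ≤ ε/(2*(C+1)) := by positivity
    have h1 : C * (ε/(2*(C+1))) ≤ (C+1) * (ε/(2*(C+1))) :=
      mul_le_mul_of_nonneg_right (by linarith) hq
    have h2 : (C+1) * (ε/(2*(C+1))) = ε/2 := by
      field_simp
    linarith
  have : C * ∫ z, ‖((z ^ (k n) : Circle) : ℂ) - 1‖ ∂σ ≤ ε/2 := by
    calc C * ∫ z, ‖((z ^ (k n) : Circle) : ℂ) - 1‖ ∂σ ≤ C * (ε/(2*(C+1))) := by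
          apply mul_le_mul_of_nonneg_left (le_of_lt hn) hC0
      _ ≤ ε/2 := hC1
  calc ‖∫ z, (((z ^ (k n) : Circle) : ℂ) * h z - h z) ∂σ‖
      ≤ ∫ z, ‖((z ^ (k n) : Circle) : ℂ) * h z - h z‖ ∂σ := hnormle
    _ ≤ 2 * (∫ z, ‖h z - φ z‖ ∂σ) + C * ∫ z, ‖((z ^ (k n) : Circle) : ℂ) - 1‖ ∂σ := hIle
    _ < 2 * (ε/4) + ε/2 := by
        apply add_lt_add_of_lt_of_le
        · exact (mul_lt_mul_iff_right₀ (by norm_num)).2 hsubnorm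
        · exact this
    _ = ε := by ring


/-- Let `σ` be a probability Borel measure on `S¹`, let `V_σ` be the
unitary operator `(V_σ f)(z) = z f(z)` on `L²(S¹,σ)`, `p` an ultrafilter on `ℕ`, and
`P ∈ ℤ[x]` with `P(0) = 0`. Then `p-lim V_σ^{P(n)} = Id` in the weak operator topology
(expressed via inner products `⟨V_σ^{P(n)} f, g⟩ = ∫ z^{P(n)} f(z) conj(g(z)) dσ` for all
`f, g ∈ L²(σ)`) if and only if `p-lim σ̂(P(n)) = 1`, where `σ̂(k) = ∫ z^k dσ(z)`. -/
theorem plim_mult_op_eq_id_iff_fourier {σ : Measure Circle} [IsProbabilityMeasure σ]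
    (p : Ultrafilter ℕ) (P : Polynomial ℤ) (hP0 : P.eval 0 = 0) :
    (∀ f g : Circle → ℂ, MemLp f 2 σ → MemLp g 2 σ →
        Tendsto
          (fun n : ℕ => ∫ z, ((z ^ (P.eval (n : ℤ)) : Circle) : ℂ) * f z
            * (starRingEnd ℂ) (g z) ∂σ)
          ↑p (𝓝 (∫ z, f z * (starRingEnd ℂ) (g z) ∂σ)))
      ↔ Tendsto (fun n : ℕ => ∫ z, ((z ^ (P.eval (n : ℤ)) : Circle) : ℂ) ∂σ)
          ↑p (𝓝 (1 : ℂ)) := by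
  constructor
  · intro H
    have := H (fun _ => 1) (fun _ => 1) (memLp_const 1) (memLp_const 1)
    simpa using this
  · intro hσ f g hf hg
    have hmeas : AEStronglyMeasurable (fun z => f z * (starRingEnd ℂ) (g z)) σ :=
      hf.1.mul (Complex.continuous_conj.comp_aestronglyMeasurable hg.1)
    have hint : Integrable (fun z => f z * (starRingEnd ℂ) (g z)) σ := by
      refine memLp_one_iff_integrable.1 ⟨hmeas, ?_⟩
      have hb := eLpNorm_le_eLpNorm_mul_eLpNorm_of_nnnorm (μ := σ) (p := 2) (q := 2) (r := 1)
        hf.1 hg.1 (fun a b => a * (starRingEnd ℂ) b) 1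
        (Eventually.of_forall fun x => by simp)
      exact lt_of_le_of_lt hb (by rw [ENNReal.coe_one, one_mul]; exact ENNReal.mul_lt_top hf.2 hg.2)
    have := key_s13 σ ↑p (fun n => P.eval (n : ℤ)) hσ _ hint
    simpa [mul_assoc] using this
end

section
/- With V = ℤ_{k₁} ⊕ … ⊕ ℤ_{k_N}, injective characters χ_j, and the bilinear form ξ as above, a subgroup G ⊂ V satisfies the (*)-property (G contains no nonzero element supported on a single coordinate) if and only if K := G^⊥ is an algebraic coupling, i.e., K projects onto ℤ_{k_j} for each coordinate j. -/
open Finset Function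

section Aux

variable {N : ℕ} (k : Fin N → ℕ) [∀ j, NeZero (k j)]
  (χ : ∀ j, AddChar (ZMod (k j)) Circle)

/-- The pairing evaluated at a single-coordinate element. -/
lemma xi_single (c : ∀ j, ZMod (k j)) (r : Fin N) (b : ZMod (k r)) :
    (∏ j, χ j (c j * (Pi.single r b : ∀ j, ZMod (k j)) j)) = χ r (c r * b) := by
  classical
  rw [Finset.prod_eq_single r]
  · rw [Pi.single_eq_same]
  · intro i _ hi
    rw [Pi.single_eq_of_ne hi, mul_zero, AddChar.map_zero_eq_one]
  · simp

/-- The complex-valued character of the product group attached to `c`. -/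
noncomputable def XiChar (c : ∀ j, ZMod (k j)) : AddChar (∀ j, ZMod (k j)) ℂ where
  toFun d := ∏ j, (χ j (c j * d j) : ℂ)
  map_zero_eq_one' := by simp
  map_add_eq_mul' a b := by
    rw [← Finset.prod_mul_distrib]
    refine Finset.prod_congr rfl fun j _ => ?_
    rw [Pi.add_apply, mul_add, AddChar.map_add_eq_mul, Circle.coe_mul]

lemma XiChar_apply (c d : ∀ j, ZMod (k j)) :
    XiChar k χ c d = ∏ j, (χ j (c j * d j) : ℂ) := rfl

lemma XiChar_apply' (c d : ∀ j, ZMod (k j)) :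
    XiChar k χ c d = ((∏ j, χ j (c j * d j) : Circle) : ℂ) := by
  rw [XiChar_apply]
  exact (map_prod Circle.coeHom _ _).symm

lemma XiChar_surjective (hχ : ∀ j, Function.Injective (χ j)) :
    Function.Surjective (XiChar k χ) := by
  classical
  have hinj : Function.Injective (XiChar k χ) := by
    intro c c' h
    funext j
    have h1 := DFunLike.congr_fun h (Pi.single j 1)
    rw [XiChar_apply', XiChar_apply', xi_single, xi_single, mul_one, mul_one] at h1
    exact hχ j (Circle.coe_injective h1)
  have hbij : Function.Bijective (XiChar k χ) :=
    (Fintype.bijective_iff_injective_and_card _).mpr ⟨hinj, (AddChar.card_eq).symm⟩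
  exact hbij.surjective

end Aux

/-- With `V = ℤ_{k₁} ⊕ … ⊕ ℤ_{k_N}`, injective characters `χ_j`, and the
bilinear form `ξ(c,d) = χ₁(c₁d₁)···χ_N(c_N d_N)`, a subgroup `G ⊆ V` satisfies the
(*)-property (no nonzero element of `G` is supported on a single coordinate) if and only if
`K := G^⊥` is an algebraic coupling, i.e. `K` projects onto `ℤ_{k_j}` for every
coordinate `j`. -/
theorem star_property_iff_annihilator_coupling {N : ℕ} (k : Fin N → ℕ)
    [∀ j, NeZero (k j)]
    (χ : ∀ j, AddChar (ZMod (k j)) Circle) (hχ : ∀ j, Function.Injective (χ j))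
    (G : AddSubgroup (∀ j, ZMod (k j))) :
    (∀ g ∈ G, ∀ r : Fin N, (∀ j : Fin N, j ≠ r → g j = 0) → g r = 0)
      ↔ ∀ (r : Fin N) (a : ZMod (k r)),
          ∃ c : ∀ j, ZMod (k j),
            (∀ d ∈ G, (∏ j, χ j (c j * d j)) = 1) ∧ c r = a := by
  classical
  constructor
  · -- (*) implies coupling
    intro hstar r a
    -- The annihilator subgroup K
    let K : AddSubgroup (∀ j, ZMod (k j)) :=
      { carrier := {c | ∀ d ∈ G, (∏ j, χ j (c j * d j)) = 1}
        zero_mem' := by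
          intro d _
          simp
        add_mem' := by
          intro c c' hc hc' d hd
          have : (∏ j, χ j ((c + c') j * d j)) =
              (∏ j, χ j (c j * d j)) * ∏ j, χ j (c' j * d j) := by
            rw [← Finset.prod_mul_distrib]
            refine Finset.prod_congr rfl fun j _ => ?_
            rw [Pi.add_apply, add_mul, AddChar.map_add_eq_mul]
          rw [this, hc d hd, hc' d hd, one_mul]
        neg_mem' := by
          intro c hc d hd
          have : (∏ j, χ j ((-c) j * d j)) = (∏ j, χ j (c j * d j))⁻¹ := by
            rw [← Finset.prod_inv_distrib]
            refine Finset.prod_congr rfl fun j _ => ?_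
            rw [Pi.neg_apply, neg_mul, AddChar.map_neg_eq_inv]
          rw [this, hc d hd, inv_one] }
    -- its projection to coordinate r
    let H : AddSubgroup (ZMod (k r)) := K.map (Pi.evalAddMonoidHom (fun j => ZMod (k j)) r)
    suffices ht : H = ⊤ by
      have ha : a ∈ H := ht ▸ AddSubgroup.mem_top a
      obtain ⟨c, hc, hcr⟩ := ha
      exact ⟨c, hc, hcr⟩
    by_contra hne
    have hmne : Nat.card H ≠ Nat.card (ZMod (k r)) := fun h =>
      hne (AddSubgroup.eq_top_of_card_eq H h)
    set m := Nat.card H with hm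
    -- b = m is a nonzero element of ZMod (k r)
    have hb : (m : ZMod (k r)) ≠ 0 := by
      intro h0
      rw [ZMod.natCast_eq_zero_iff] at h0
      have hdvd := h0
      have h1 : 0 < m := Nat.card_pos
      have h2 : m ∣ k r := by
        have := AddSubgroup.card_addSubgroup_dvd_card H
        rwa [Nat.card_zmod] at this
      have h3 : k r ≤ m := Nat.le_of_dvd h1 hdvd
      have h4 : m ≤ k r := Nat.le_of_dvd (Nat.pos_of_ne_zero (NeZero.ne _)) h2
      exact hmne (by rw [Nat.card_zmod]; omega)
    -- every element of K pairs trivially with Pi.single r m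
    have hker : ∀ c ∈ K, χ r (c r * (m : ZMod (k r))) = 1 := by
      intro c hc
      have hcr : c r ∈ H := ⟨c, hc, rfl⟩
      have : m • (⟨c r, hcr⟩ : H) = 0 := card_nsmul_eq_zero'
      have h0 : m • (c r) = 0 := by
        have := congrArg (Subtype.val) this
        simpa using this
      rw [mul_comm, ← nsmul_eq_mul, h0, AddChar.map_zero_eq_one]
    -- hence Pi.single r m lies in the double annihilator, which is G
    set d0 : ∀ j, ZMod (k j) := Pi.single r (m : ZMod (k r)) with hd0
    have hd0G : d0 ∈ G := by
      by_contra hdG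
      have hq : (QuotientAddGroup.mk' G) d0 ≠ 0 := by
        rw [QuotientAddGroup.mk'_apply, Ne, QuotientAddGroup.eq_zero_iff]
        exact hdG
      obtain ⟨ψ, hψ⟩ := (AddChar.exists_apply_ne_zero).mpr hq
      set ψ' : AddChar (∀ j, ZMod (k j)) ℂ := ψ.compAddMonoidHom (QuotientAddGroup.mk' G)
        with hψ'
      obtain ⟨c, hc⟩ := XiChar_surjective k χ hχ ψ'
      have hcK : c ∈ K := by
        intro d hd
        have h1 : ψ' d = 1 := by
          rw [hψ', AddChar.compAddMonoidHom_apply, QuotientAddGroup.mk'_apply,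
            (QuotientAddGroup.eq_zero_iff d).mpr hd, AddChar.map_zero_eq_one]
        rw [← hc, XiChar_apply'] at h1
        exact Circle.coe_injective (by rw [h1, Circle.coe_one])
      have h2 : ψ' d0 = 1 := by
        rw [← hc, XiChar_apply', xi_single, hker c hcK, Circle.coe_one]
      rw [hψ', AddChar.compAddMonoidHom_apply] at h2
      exact hψ h2
    -- (*)-property forces m = 0 in ZMod (k r), contradiction
    have := hstar d0 hd0G r (fun j hj => Pi.single_eq_of_ne hj _)
    rw [hd0, Pi.single_eq_same] at this
    exact hb this
  · -- coupling implies (*)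
    intro hcoup g hg r hsupp
    obtain ⟨c, hcK, hcr⟩ := hcoup r 1
    have hg' : g = Pi.single r (g r) := by
      funext j
      rcases eq_or_ne j r with rfl | hj
      · rw [Pi.single_eq_same]
      · rw [Pi.single_eq_of_ne hj, hsupp j hj]
    have h1 := hcK g hg
    rw [hg', xi_single, hcr, one_mul] at h1
    exact hχ r (h1.trans (AddChar.map_zero_eq_one _).symm)
end

section
/- Let G ⊂ ℤ_{k₁} ⊕ … ⊕ ℤ_{k_N} be a subgroup satisfying the (*)-property, and let G₁ be the projection of G onto the first N−1 coordinates. Then there exists a group homomorphism w : G₁ → ℤ_{k_N} such that G = {(g₁, w(g₁)) : g₁ ∈ G₁}; moreover, ker w, viewed as a subgroup of ℤ_{k₁} ⊕ … ⊕ ℤ_{k_{N−1}}, also satisfies the (*)-property. -/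
/-- Let `G ⊆ ℤ_{k₀} ⊕ … ⊕ ℤ_{k_N}` be a subgroup satisfying the
(*)-property and let `G₁` be the projection of `G` onto the first `N` coordinates. Then
there is a group homomorphism `w : G₁ → ℤ_{k_N}` such that `G = {(g₁, w g₁) : g₁ ∈ G₁}`;
moreover the kernel of `w`, viewed inside `ℤ_{k₀} ⊕ … ⊕ ℤ_{k_{N-1}}`, also satisfies the
(*)-property. -/
theorem star_property_graph_decomposition {N : ℕ} (k : Fin (N + 1) → ℕ)
    (G : AddSubgroup (∀ j : Fin (N + 1), ZMod (k j)))
    (hstar : ∀ g ∈ G, ∀ r : Fin (N + 1), (∀ j, j ≠ r → g j = 0) → g r = 0)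
    (G₁ : AddSubgroup (∀ j : Fin N, ZMod (k j.castSucc)))
    (hG₁ : ∀ x : ∀ j : Fin N, ZMod (k j.castSucc),
      x ∈ G₁ ↔ ∃ g ∈ G, ∀ j : Fin N, g j.castSucc = x j) :
    ∃ w : G₁ →+ ZMod (k (Fin.last N)),
      (∀ g : ∀ j : Fin (N + 1), ZMod (k j),
        g ∈ G ↔ ∃ h : (fun j : Fin N => g j.castSucc) ∈ G₁,
          g (Fin.last N) = w ⟨fun j : Fin N => g j.castSucc, h⟩) ∧
      (∀ y : G₁, w y = 0 →
        ∀ r : Fin N,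
          (∀ j : Fin N, j ≠ r → (y : ∀ j : Fin N, ZMod (k j.castSucc)) j = 0) →
            (y : ∀ j : Fin N, ZMod (k j.castSucc)) r = 0) := by
  classical
  -- uniqueness of the last coordinate
  have huniq : ∀ g ∈ G, ∀ g' ∈ G, (∀ j : Fin N, g j.castSucc = g' j.castSucc) →
      g (Fin.last N) = g' (Fin.last N) := by
    intro g hg g' hg' hagree
    have hd : g - g' ∈ G := sub_mem hg hg'
    have := hstar (g - g') hd (Fin.last N) ?_
    · have : g (Fin.last N) - g' (Fin.last N) = 0 := this
      linear_combination (norm := abel) this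
    · intro j hj
      obtain ⟨j', rfl⟩ := Fin.exists_castSucc_eq.mpr hj
      simpa [sub_eq_zero] using hagree j'
  -- choose a lift for each element of G₁
  have hlift : ∀ y : G₁, ∃ g ∈ G, ∀ j : Fin N, g j.castSucc = (y.1) j := fun y =>
    (hG₁ y).mp y.2
  choose L hLmem hLproj using hlift
  have key : ∀ (y : G₁) (g) (_ : g ∈ G), (∀ j : Fin N, g j.castSucc = (y.1) j) →
      g (Fin.last N) = L y (Fin.last N) := by
    intro y g hg hgy
    exact huniq g hg (L y) (hLmem y) (fun j => by rw [hgy j, hLproj y j])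
  refine ⟨{ toFun := fun y => L y (Fin.last N)
            map_zero' := ?_
            map_add' := ?_ }, ?_, ?_⟩
  · exact (key 0 0 (zero_mem G) (fun j => rfl)).symm
  · intro a b
    refine (key (a + b) (L a + L b) (add_mem (hLmem a) (hLmem b)) ?_).symm
    intro j
    simp [hLproj a j, hLproj b j]
  · intro g
    constructor
    · intro hg
      have hmem : (fun j : Fin N => g j.castSucc) ∈ G₁ :=
        (hG₁ _).mpr ⟨g, hg, fun j => rfl⟩
      exact ⟨hmem, key ⟨_, hmem⟩ g hg (fun j => rfl)⟩
    · rintro ⟨h, hlast⟩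
      set y : G₁ := ⟨fun j : Fin N => g j.castSucc, h⟩
      have : g = L y := by
        funext j
        rcases Fin.eq_castSucc_or_eq_last j with ⟨j', rfl⟩ | rfl
        · exact (hLproj y j').symm
        · exact hlast
      rw [this]; exact hLmem y
  · intro y hy r hzero
    have hstar' := hstar (L y) (hLmem y) r.castSucc ?_
    · rw [hLproj y r] at hstar'; exact hstar'
    · intro j hj
      rcases Fin.eq_castSucc_or_eq_last j with ⟨j', rfl⟩ | rfl
      · rw [hLproj y j']
        exact hzero j' (fun h => hj (by rw [h]))
      · exact hy
end

section
/- Let H be a subgroup of ℤ^N and Q₁,…,Q_t ∈ ℤ^N \ H. Then there exists a subgroup G ⊂ ℤ^N of finite index such that H ⊂ G and Q₁,…,Q_t ∉ G. -/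
-- auxiliary: kernel of hom into ZMod M (M > 0) has nonzero index
lemma ker_zmod_index_ne_zero {A : Type*} [AddGroup A] {M : ℕ} [NeZero M]
    (φ : A →+ ZMod M) : φ.ker.index ≠ 0 := by
  rw [AddSubgroup.index_ker]
  have : Finite φ.range := Subtype.finite
  exact Nat.card_ne_zero.mpr ⟨⟨0, AddSubgroup.zero_mem _⟩, this⟩

lemma separate_one {N : ℕ} (H : AddSubgroup (Fin N → ℤ)) {q : Fin N → ℤ}
    (hq : q ∉ H) :
    ∃ G : AddSubgroup (Fin N → ℤ), G.index ≠ 0 ∧ H ≤ G ∧ q ∉ G := by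
  classical
  set H' : Submodule ℤ (Fin N → ℤ) := AddSubgroup.toIntSubmodule H with hH'
  obtain ⟨n, snf⟩ := H'.smithNormalForm (Pi.basisFun ℤ (Fin N))
  have hq' : q ∉ H' := hq
  -- key dichotomy
  by_cases hcase : (∀ i, i ∉ Set.range snf.f → snf.bM.repr q i = 0) ∧
      ∀ j : Fin n, snf.a j ∣ snf.bM.repr q (snf.f j)
  · -- then q ∈ H', contradiction
    exfalso
    obtain ⟨h1, h2⟩ := hcase
    choose c hc using h2
    have : q = ((∑ j, c j • snf.bN j : H') : Fin N → ℤ) := by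
      apply snf.bM.repr.injective
      ext i
      by_cases hi : i ∈ Set.range snf.f
      · obtain ⟨j, rfl⟩ := hi
        have : ((∑ k, c k • snf.bN k : H') : Fin N → ℤ)
            = ∑ k, c k • ((snf.bN k : Fin N → ℤ)) := by
          push_cast; simp
        rw [this]
        simp only [map_sum, map_smul, Finsupp.coe_finset_sum, Finsupp.coe_smul,
          Finset.sum_apply, Pi.smul_apply]
        rw [hc j]
        simp only [snf.snf, map_smul, Module.Basis.repr_self]
        rw [Finset.sum_eq_single j]
        · simp [mul_comm]
        · intro k _ hk
          simp [Finsupp.single_apply, snf.f.injective.ne hk]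
        · simp
      · rw [h1 i hi]
        have : ((∑ k, c k • snf.bN k : H') : Fin N → ℤ)
            = ∑ k, c k • ((snf.bN k : Fin N → ℤ)) := by
          push_cast; simp
        rw [this]
        simp only [map_sum, map_smul, Finsupp.coe_finset_sum, Finsupp.coe_smul,
          Finset.sum_apply, Pi.smul_apply]
        refine (Finset.sum_eq_zero fun k _ => ?_).symm
        have hne : snf.f k ≠ i := fun h => hi ⟨k, h⟩
        rw [snf.snf k, map_smul]
        simp [Finsupp.single_apply, hne]
    rw [this] at hq'
    exact hq' (∑ j, c j • snf.bN j : H').2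
  · push_neg at hcase
    rcases Classical.em (∀ i, i ∉ Set.range snf.f → snf.bM.repr q i = 0) with h1 | h1
    · -- case 2: some j with a j ∤ coord
      obtain ⟨j, hj⟩ := hcase h1
      set M : ℕ := (snf.a j).natAbs with hM
      have haj : snf.a j ≠ 0 := by
        intro h
        apply snf.bN.ne_zero j
        have := snf.snf j
        rw [h, zero_smul] at this
        exact Subtype.ext this
      have : NeZero M := ⟨by simpa [hM, Int.natAbs_eq_zero] using haj⟩
      set φ : (Fin N → ℤ) →+ ZMod M :=
        (Int.castAddHom (ZMod M)).comp (snf.bM.coord (snf.f j)).toAddMonoidHom with hφ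
      refine ⟨φ.ker, ker_zmod_index_ne_zero φ, ?_, ?_⟩
      · intro h hh
        have : snf.bM.repr h (snf.f j) = snf.a j • snf.bN.repr ⟨h, hh⟩ j := by
          have := snf.repr_apply_embedding_eq_repr_smul (m := ⟨h, hh⟩) (i := j)
          rw [this, map_smul]; rfl
        show ((snf.bM.coord (snf.f j)) h : ZMod M) = 0
        rw [show (snf.bM.coord (snf.f j)) h = snf.bM.repr h (snf.f j) from rfl, this]
        rw [ZMod.intCast_zmod_eq_zero_iff_dvd]
        exact Dvd.dvd.mul_right (Int.natAbs_dvd.mpr dvd_rfl) _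
      · intro hqk
        have : ((snf.bM.repr q (snf.f j) : ℤ) : ZMod M) = 0 := hqk
        rw [ZMod.intCast_zmod_eq_zero_iff_dvd] at this
        exact hj ((Int.natAbs_dvd).mp this)
    · -- case 1: some free coordinate nonzero
      push_neg at h1
      obtain ⟨i, hi, hci⟩ := h1
      set c : ℤ := snf.bM.repr q i with hc
      set M : ℕ := c.natAbs + 1 with hM
      have : NeZero M := ⟨by simp [hM]⟩
      set φ : (Fin N → ℤ) →+ ZMod M :=
        (Int.castAddHom (ZMod M)).comp (snf.bM.coord i).toAddMonoidHom with hφ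
      refine ⟨φ.ker, ker_zmod_index_ne_zero φ, ?_, ?_⟩
      · intro h hh
        show ((snf.bM.coord i) h : ZMod M) = 0
        have : snf.bM.repr h i = 0 := snf.repr_eq_zero_of_notMem_range ⟨h, hh⟩ hi
        rw [show (snf.bM.coord i) h = snf.bM.repr h i from rfl, this]
        simp
      · intro hqk
        have : ((c : ℤ) : ZMod M) = 0 := hqk
        rw [ZMod.intCast_zmod_eq_zero_iff_dvd] at this
        have h2 : M ∣ c.natAbs := Int.natCast_dvd_natCast.mp ((Int.dvd_natAbs).mpr this)
        exact absurd (Nat.le_of_dvd (Int.natAbs_pos.mpr hci) h2) (by omega)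


/-- separation lemma. Let `H` be a subgroup of `ℤ^N` and
`Q₁,…,Q_t ∈ ℤ^N \ H`. Then there is a subgroup `G ⊆ ℤ^N` of finite index with `H ⊆ G` and
`Q₁,…,Q_t ∉ G`. -/
theorem exists_finite_index_separating_subgroup {N t : ℕ}
    (H : AddSubgroup (Fin N → ℤ)) (Q : Fin t → (Fin N → ℤ)) (hQ : ∀ i, Q i ∉ H) :
    ∃ G : AddSubgroup (Fin N → ℤ), G.index ≠ 0 ∧ H ≤ G ∧ ∀ i, Q i ∉ G := by
  choose G hG1 hG2 hG3 using fun i => separate_one H (hQ i)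
  exact ⟨⨅ i, G i, AddSubgroup.index_iInf_ne_zero hG1,
    le_iInf hG2, fun i hi => hG3 i ((iInf_le G i) hi)⟩
end
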